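/- arXiv:2102.08600 — 4 statements merged into one kernel-verified Lean document; each statement's English description precedes it below -/
import Mathlib

section
/- Under the stated assumptions, the convergence factor of the exact two-level hierarchical basis method satisfies the identity ‖E_TL‖_A = 1 − σ_TL, where σ_TL = λ_min^+( S · M̃_s^{-1} · S^T · A · (I − Π_A) ) is the smallest positive eigenvalue of the matrix S M̃_s^{-1} S^T A (I − Π_A). -/
open Matrix

/-- Smallest eigenvalue (real spectrum). -/
noncomputable def lamMin {n : ℕ} (M : Matrix (Fin n) (Fin n) ℝ) : ℝ :=
  sInf (spectrum ℝ M)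

/-- Largest eigenvalue (real spectrum). -/
noncomputable def lamMax {n : ℕ} (M : Matrix (Fin n) (Fin n) ℝ) : ℝ :=
  sSup (spectrum ℝ M)

/-- Smallest positive eigenvalue (real spectrum). -/
noncomputable def lamMinPos {n : ℕ} (M : Matrix (Fin n) (Fin n) ℝ) : ℝ :=
  sInf {t : ℝ | t ∈ spectrum ℝ M ∧ 0 < t}

/-- Energy norm of a vector induced by an SPD matrix `A`. -/
noncomputable def eNorm {n : ℕ} (A : Matrix (Fin n) (Fin n) ℝ) (v : Fin n → ℝ) : ℝ :=
  Real.sqrt (v ⬝ᵥ A.mulVec v)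

/-- `A`-norm of a matrix `B`: `‖B‖_A = sup_{v ≠ 0} ‖Bv‖_A / ‖v‖_A`. -/
noncomputable def aNorm {n : ℕ} (A B : Matrix (Fin n) (Fin n) ℝ) : ℝ :=
  sSup {r : ℝ | ∃ v : Fin n → ℝ, v ≠ 0 ∧ r = eNorm A (B.mulVec v) / eNorm A v}

/-- The `A`-orthogonal projection `Π_A = P (Pᵀ A P)⁻¹ Pᵀ A`. -/
noncomputable def proj {n nc : ℕ} (A : Matrix (Fin n) (Fin n) ℝ)
    (P : Matrix (Fin n) (Fin nc) ℝ) : Matrix (Fin n) (Fin n) ℝ :=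
  P * (Pᵀ * A * P)⁻¹ * Pᵀ * A

/-- `M̃_s = Msᵀ (Ms + Msᵀ - As)⁻¹ Ms`. -/
noncomputable def tMs {ns : ℕ} (Ms As : Matrix (Fin ns) (Fin ns) ℝ) :
    Matrix (Fin ns) (Fin ns) ℝ :=
  Msᵀ * (Ms + Msᵀ - As)⁻¹ * Ms

/-- `S M̃_s⁻¹ Sᵀ A`. -/
noncomputable def smoothX {n ns : ℕ} (A : Matrix (Fin n) (Fin n) ℝ)
    (S : Matrix (Fin n) (Fin ns) ℝ) (Ms : Matrix (Fin ns) (Fin ns) ℝ) :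
    Matrix (Fin n) (Fin n) ℝ :=
  S * (tMs Ms (Sᵀ * A * S))⁻¹ * Sᵀ * A

/-- `σ_TL = λ_min⁺( S M̃_s⁻¹ Sᵀ A (I - Π_A) )`. -/
noncomputable def sigmaTL {n ns nc : ℕ} (A : Matrix (Fin n) (Fin n) ℝ)
    (S : Matrix (Fin n) (Fin ns) ℝ) (P : Matrix (Fin n) (Fin nc) ℝ)
    (Ms : Matrix (Fin ns) (Fin ns) ℝ) : ℝ :=
  lamMinPos (smoothX A S Ms * (1 - proj A P))

/-- Exact TLHB iteration matrix. -/
noncomputable def Etl {n ns nc : ℕ} (A : Matrix (Fin n) (Fin n) ℝ)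
    (S : Matrix (Fin n) (Fin ns) ℝ) (P : Matrix (Fin n) (Fin nc) ℝ)
    (Ms : Matrix (Fin ns) (Fin ns) ℝ) : Matrix (Fin n) (Fin n) ℝ :=
  (1 - S * (Msᵀ)⁻¹ * Sᵀ * A) * (1 - proj A P) * (1 - S * Ms⁻¹ * Sᵀ * A)

/-- Inexact TLHB iteration matrix with coarse solver `Bc`. -/
noncomputable def EtlIn {n ns nc : ℕ} (A : Matrix (Fin n) (Fin n) ℝ)
    (S : Matrix (Fin n) (Fin ns) ℝ) (P : Matrix (Fin n) (Fin nc) ℝ)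
    (Ms : Matrix (Fin ns) (Fin ns) ℝ) (Bc : Matrix (Fin nc) (Fin nc) ℝ) :
    Matrix (Fin n) (Fin n) ℝ :=
  (1 - S * (Msᵀ)⁻¹ * Sᵀ * A) * (1 - P * Bc⁻¹ * Pᵀ * A) * (1 - S * Ms⁻¹ * Sᵀ * A)


section Helpers

open Matrix

variable {m : Type*} [Fintype m] [DecidableEq m]

theorem memSpec_iff_eigen (M : Matrix m m ℝ) (t : ℝ) :
    t ∈ spectrum ℝ M ↔ ∃ v : m → ℝ, v ≠ 0 ∧ M *ᵥ v = t • v := by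
  rw [← AlgEquiv.spectrum_eq (Matrix.toLinAlgEquiv <| Pi.basisFun ℝ m),
    ← Module.End.hasEigenvalue_iff_mem_spectrum]
  constructor
  · intro h
    obtain ⟨v, hv⟩ := h.exists_hasEigenvector
    exact ⟨v, hv.2, hv.apply_eq_smul⟩
  · rintro ⟨v, hv0, hv⟩
    apply Module.End.hasEigenvalue_of_hasEigenvector (x := v)
    refine ⟨Module.End.mem_eigenspace_iff.mpr ?_, hv0⟩
    exact hv

theorem spec_conj {R R' M : Matrix m m ℝ} (h1 : R * R' = 1) (h2 : R' * R = 1) :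
    spectrum ℝ (R * M * R') = spectrum ℝ M := by
  have key : ∀ (R R' M : Matrix m m ℝ), R * R' = 1 → R' * R = 1 →
      ∀ t ∈ spectrum ℝ M, t ∈ spectrum ℝ (R * M * R') := by
    intro R R' M h1 h2 t ht
    rw [memSpec_iff_eigen] at ht ⊢
    obtain ⟨v, hv0, hv⟩ := ht
    refine ⟨R *ᵥ v, fun h => hv0 ?_, ?_⟩
    · have := congrArg (R' *ᵥ ·) h
      simpa [Matrix.mulVec_mulVec, h2] using this
    · simp only [← Matrix.mulVec_mulVec]
      rw [show R' *ᵥ R *ᵥ v = v by simp [Matrix.mulVec_mulVec, h2], hv,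
        Matrix.mulVec_smul]
  ext t
  constructor
  · intro ht
    have h3 : R' * (R * M * R') * R = M := by
      simp only [← Matrix.mul_assoc]
      rw [h2, Matrix.one_mul, Matrix.mul_assoc, h2, Matrix.mul_one]
    have := key R' R (R * M * R') h2 h1 t ht
    rwa [h3] at this
  · exact key R R' M h1 h2 t

omit [DecidableEq m] in
theorem mulVec_dot {a : Type*} [Fintype a] (M : Matrix m a ℝ) (x : a → ℝ) (y : m → ℝ) :
    (M *ᵥ x) ⬝ᵥ y = x ⬝ᵥ (Mᵀ *ᵥ y) := by
  rw [dotProduct_comm, dotProduct_mulVec, ← mulVec_transpose, dotProduct_comm]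

omit [DecidableEq m] in
theorem dot_self_nonneg (v : m → ℝ) : 0 ≤ v ⬝ᵥ v :=
  Finset.sum_nonneg fun i _ => mul_self_nonneg _

omit [DecidableEq m] in
theorem cs_dot (x y : m → ℝ) : (x ⬝ᵥ y)^2 ≤ (x ⬝ᵥ x) * (y ⬝ᵥ y) := by
  simpa [dotProduct, pow_two, mul_comm, mul_assoc, mul_left_comm] using
    Finset.sum_mul_sq_le_sq_mul_sq Finset.univ x y

theorem qf_conj (U : Matrix m m ℝ) (e : m → ℝ) (u : m → ℝ) :
    ((U * diagonal e * Uᵀ) *ᵥ u) ⬝ᵥ u = ∑ i, e i * ((Uᵀ *ᵥ u) i)^2 := by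
  set a := Uᵀ *ᵥ u with ha
  rw [Matrix.mul_assoc, ← Matrix.mulVec_mulVec, mulVec_dot]
  rw [show (diagonal e * Uᵀ) *ᵥ u = diagonal e *ᵥ a by rw [← Matrix.mulVec_mulVec]]
  simp [Matrix.mulVec_diagonal, dotProduct, pow_two, mul_assoc]
  rfl

omit [DecidableEq m] in
theorem proj_dot_le (Q : Matrix m m ℝ) (hQT : Qᵀ = Q) (hQQ : Q * Q = Q) (z : m → ℝ) :
    (Q *ᵥ z) ⬝ᵥ (Q *ᵥ z) ≤ z ⬝ᵥ z := by
  have h1 : (Q *ᵥ z) ⬝ᵥ (Q *ᵥ z) = z ⬝ᵥ (Q *ᵥ z) := by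
    rw [mulVec_dot, hQT, Matrix.mulVec_mulVec, hQQ]
  have h2 : (z - Q *ᵥ z) ⬝ᵥ (z - Q *ᵥ z) = z ⬝ᵥ z - z ⬝ᵥ (Q *ᵥ z) := by
    rw [sub_dotProduct, dotProduct_sub, dotProduct_sub, h1]
    have h3 : (Q *ᵥ z) ⬝ᵥ z = z ⬝ᵥ (Q *ᵥ z) := dotProduct_comm _ _
    rw [h3]
    ring
  have h4 := dot_self_nonneg (z - Q *ᵥ z)
  rw [h2] at h4
  rw [h1]
  linarith

theorem rank_inj {a : Type*} [Fintype a] {l : ℕ} (B : Matrix a (Fin l) ℝ) (h : B.rank = l)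
    {x : Fin l → ℝ} (hx : B *ᵥ x = 0) : x = 0 := by
  have h1 := LinearMap.finrank_range_add_finrank_ker B.mulVecLin
  rw [show Module.finrank ℝ (Fin l → ℝ) = l by simp] at h1
  rw [show Module.finrank ℝ (LinearMap.range B.mulVecLin) = l from h] at h1
  have h2 : Module.finrank ℝ (LinearMap.ker B.mulVecLin) = 0 := by omega
  have h3 : LinearMap.ker B.mulVecLin = ⊥ := Submodule.finrank_eq_zero.mp h2
  have h4 : x ∈ LinearMap.ker B.mulVecLin := by
    simp [LinearMap.mem_ker, Matrix.mulVecLin_apply, hx]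
  rw [h3] at h4
  simpa using h4

theorem exists_ker {k l : ℕ} (B : Matrix (Fin k) (Fin l) ℝ) (h : k < l) :
    ∃ x : Fin l → ℝ, x ≠ 0 ∧ B *ᵥ x = 0 := by
  have h1 := LinearMap.finrank_range_add_finrank_ker B.mulVecLin
  rw [show Module.finrank ℝ (Fin l → ℝ) = l by simp] at h1
  have h2 : B.rank ≤ k := B.rank_le_card_height.trans (by simp)
  have h3 : LinearMap.ker B.mulVecLin ≠ ⊥ := by
    intro hbot
    rw [hbot] at h1
    rw [finrank_bot ℝ (Fin l → ℝ), add_zero] at h1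
    rw [show Module.finrank ℝ (LinearMap.range B.mulVecLin) = B.rank from rfl] at h1
    omega
  obtain ⟨x, hx, hx0⟩ := Submodule.ne_bot_iff _ |>.mp h3
  exact ⟨x, hx0, by simpa [Matrix.mulVecLin_apply] using hx⟩

end Helpers

section CoreSpec
open Matrix
variable {m : Type*} [Fintype m] [DecidableEq m]

/-- Core spectral estimate. -/
theorem core_spectral (C Q : Matrix m m ℝ) (hCsym : C.IsHermitian) (hQQ : Q * Q = Q)
    (hQC : Q * C = C) (hCQ : C * Q = C)
    (hpsd : ∀ z, 0 ≤ (C *ᵥ z) ⬝ᵥ z)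
    (hCle : ∀ z, (C *ᵥ z) ⬝ᵥ z ≤ z ⬝ᵥ z)
    (hker : ∀ z, Q *ᵥ z = z → (C *ᵥ z) ⬝ᵥ z = 0 → z = 0)
    (hC0 : C ≠ 0) :
    0 < sInf {t : ℝ | t ∈ spectrum ℝ C ∧ 0 < t} ∧
    sInf {t : ℝ | t ∈ spectrum ℝ C ∧ 0 < t} ≤ 1 ∧
    (∃ w, w ≠ 0 ∧ C *ᵥ w = sInf {t : ℝ | t ∈ spectrum ℝ C ∧ 0 < t} • w ∧ Q *ᵥ w = w) ∧
    (∀ u, ((Q - C) *ᵥ u) ⬝ᵥ u ≤ (1 - sInf {t : ℝ | t ∈ spectrum ℝ C ∧ 0 < t}) * (u ⬝ᵥ u)) := by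
  set T := {t : ℝ | t ∈ spectrum ℝ C ∧ 0 < t} with hT
  set c := sInf T with hc
  set U : Matrix m m ℝ := (hCsym.eigenvectorUnitary : Matrix m m ℝ) with hU
  set d : m → ℝ := hCsym.eigenvalues with hd
  have hU1 : Uᵀ * U = 1 := by
    rw [← U.conjTranspose_eq_transpose_of_trivial]
    exact Unitary.coe_star_mul_self hCsym.eigenvectorUnitary
  have hU2 : U * Uᵀ = 1 := by
    rw [← U.conjTranspose_eq_transpose_of_trivial]
    exact Unitary.coe_mul_star_self hCsym.eigenvectorUnitary
  have hdiag : C = U * diagonal d * Uᵀ := by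
    have h := hCsym.spectral_theorem
    rw [Unitary.conjStarAlgAut_apply, Matrix.star_eq_conjTranspose, U.conjTranspose_eq_transpose_of_trivial] at h
    rw [show (RCLike.ofReal ∘ hCsym.eigenvalues : m → ℝ) = d by funext i; simp [hd]] at h
    exact h
  have hspecC : spectrum ℝ C = Set.range d := by
    rw [hdiag, spec_conj hU2 hU1, spectrum_diagonal]
  have hCU : C * U = U * diagonal d := by
    rw [hdiag, Matrix.mul_assoc, hU1, Matrix.mul_one]
  have hcol : ∀ i, C *ᵥ (fun k => U k i) = d i • (fun k => U k i) := by
    intro i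
    funext k
    have h1 : (C * U) k i = (U * diagonal d) k i := by rw [hCU]
    rw [Matrix.mul_diagonal, Matrix.mul_apply] at h1
    simp only [Matrix.mulVec, dotProduct, Pi.smul_apply, smul_eq_mul]
    rw [h1, mul_comm]
  have hcolnorm : ∀ i, (fun k => U k i) ⬝ᵥ (fun k => U k i) = 1 := by
    intro i
    have h1 := congrFun (congrFun hU1 i) i
    simp only [Matrix.mul_apply, Matrix.transpose_apply, Matrix.one_apply_eq] at h1
    simpa [dotProduct] using h1
  have hd0 : ∀ i, 0 ≤ d i := by
    intro i
    have h1 := hpsd (fun k => U k i)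
    rw [hcol i, smul_dotProduct, hcolnorm i, smul_eq_mul, mul_one] at h1
    exact h1
  have hTsub : T ⊆ Set.range d := fun t ht => by rw [← hspecC]; exact ht.1
  have hTfin : T.Finite := Set.Finite.subset (Set.finite_range d) hTsub
  have hne : T.Nonempty := by
    have hdne : ∃ i, d i ≠ 0 := by
      by_contra hall
      push_neg at hall
      apply hC0
      rw [hdiag, show diagonal d = 0 by ext i j; by_cases hij : i = j <;>
        simp [Matrix.diagonal_apply, hij, hall]]
      simp
    obtain ⟨i, hi⟩ := hdne
    exact ⟨d i, by rw [hT]; exact ⟨by rw [hspecC]; exact ⟨i, rfl⟩,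
      lt_of_le_of_ne (hd0 i) (Ne.symm hi)⟩⟩
  have hcT : c ∈ T := hne.csInf_mem hTfin
  have hcpos : 0 < c := hcT.2
  have hbdd : BddBelow T := ⟨0, fun t ht => le_of_lt ht.2⟩
  obtain ⟨w, hw0, hww⟩ := (memSpec_iff_eigen C c).mp hcT.1
  have hQw : Q *ᵥ w = w := by
    have h1 : Q *ᵥ (C *ᵥ w) = C *ᵥ w := by rw [Matrix.mulVec_mulVec, hQC]
    rw [hww, Matrix.mulVec_smul] at h1
    exact smul_right_injective (m → ℝ) (ne_of_gt hcpos) h1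
  have hc1 : c ≤ 1 := by
    have h1 := hCle w
    rw [hww, smul_dotProduct, smul_eq_mul] at h1
    have hwpos : 0 < w ⬝ᵥ w := by
      rcases lt_or_eq_of_le (dot_self_nonneg w) with h | h
      · exact h
      · exact absurd (dotProduct_self_eq_zero.mp h.symm) hw0
    exact le_of_mul_le_mul_right (by linarith) hwpos
  refine ⟨hcpos, hc1, ⟨w, hw0, hww, hQw⟩, ?_⟩
  set q : m → ℝ := fun i => if d i = 0 then 0 else 1 with hq
  have hQcol : ∀ i, Q *ᵥ (fun k => U k i) = q i • (fun k => U k i) := by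
    intro i
    by_cases h : d i = 0
    · have hC0 : C *ᵥ (fun k => U k i) = 0 := by rw [hcol i, h, zero_smul]
      set p := Q *ᵥ (fun k => U k i) with hp
      have hQp : Q *ᵥ p = p := by rw [hp, Matrix.mulVec_mulVec, hQQ]
      have hCp : C *ᵥ p = 0 := by
        rw [hp, Matrix.mulVec_mulVec, hCQ, hC0]
      have hp0 : p = 0 := hker p hQp (by rw [hCp, zero_dotProduct])
      rw [hq]
      simp [h, ← hp, hp0]
    · have h1 : Q *ᵥ (C *ᵥ (fun k => U k i)) = C *ᵥ (fun k => U k i) := by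
        rw [Matrix.mulVec_mulVec, hQC]
      rw [hcol i, Matrix.mulVec_smul] at h1
      have h2 := smul_right_injective (m → ℝ) h h1
      rw [hq]
      simp [h, h2]
  have hQU : Q * U = U * diagonal q := by
    ext k i
    have h1 := congrFun (hQcol i) k
    simp only [Matrix.mulVec, dotProduct, Pi.smul_apply, smul_eq_mul] at h1
    rw [Matrix.mul_diagonal, Matrix.mul_apply]
    rw [h1, mul_comm]
  have hQdiag : Q = U * diagonal q * Uᵀ := by
    calc Q = Q * (U * Uᵀ) := by rw [hU2, Matrix.mul_one]
    _ = (Q * U) * Uᵀ := by rw [Matrix.mul_assoc]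
    _ = U * diagonal q * Uᵀ := by rw [hQU]
  intro u
  have hsub : Q - C = U * diagonal (fun i => q i - d i) * Uᵀ := by
    rw [hQdiag, hdiag]
    rw [show (diagonal fun i => q i - d i) = diagonal q - diagonal d from (Matrix.diagonal_sub q d).symm]
    rw [Matrix.mul_sub, Matrix.sub_mul]
  set a := Uᵀ *ᵥ u with ha
  have huu : u ⬝ᵥ u = ∑ i, (a i)^2 := by
    have h1 : a ⬝ᵥ a = u ⬝ᵥ u := by
      rw [ha, mulVec_dot, Matrix.transpose_transpose, Matrix.mulVec_mulVec, hU2, Matrix.one_mulVec]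
    rw [← h1]
    simp [dotProduct, pow_two]
  rw [hsub, qf_conj, huu, Finset.mul_sum]
  apply Finset.sum_le_sum
  intro i _
  by_cases h : d i = 0
  · have hqd : q i - d i = 0 := by simp [hq, h]
    rw [hqd, zero_mul]
    exact mul_nonneg (by linarith) (sq_nonneg _)
  · have hdi : d i ∈ T := ⟨by rw [hspecC]; exact ⟨i, rfl⟩, lt_of_le_of_ne (hd0 i) (Ne.symm h)⟩
    have hcle : c ≤ d i := csInf_le hbdd hdi
    have hqd : q i - d i ≤ 1 - c := by simp only [hq, if_neg h]; linarith
    exact mul_le_mul_of_nonneg_right hqd (sq_nonneg _)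

end CoreSpec

/-- Theorem 3.1 (exact TLHB convergence identity): `‖E_TL‖_A = 1 - σ_TL`. -/
theorem exact_tlhb_identity {n ns nc : ℕ}
    (A : Matrix (Fin n) (Fin n) ℝ) (hA : A.PosDef)
    (S : Matrix (Fin n) (Fin ns) ℝ) (hS : S.rank = ns)
    (P : Matrix (Fin n) (Fin nc) ℝ) (hP : P.rank = nc)
    (hns : ns < n) (hnc : nc < n) (hsum : n ≤ ns + nc)
    (hSP : (fromCols S P).rank = n)
    (Ms : Matrix (Fin ns) (Fin ns) ℝ) (hMs : IsUnit Ms.det)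
    (hMsA : (Ms + Msᵀ - Sᵀ * A * S).PosDef) :
    aNorm A (Etl A S P Ms) = 1 - sigmaTL A S P Ms := by
  classical
  -- ## setup: square root of A and invertibility facts
  have hAH : Aᵀ = A := by
    rw [← A.conjTranspose_eq_transpose_of_trivial]; exact hA.1
  obtain ⟨R, hRsym, hRR⟩ : ∃ R : Matrix (Fin n) (Fin n) ℝ, Rᵀ = R ∧ R * R = A := by
    open scoped MatrixOrder in
    refine ⟨CFC.sqrt A, ?_, CFC.sqrt_mul_sqrt_self A hA.posSemidef.nonneg⟩
    rw [← Matrix.conjTranspose_eq_transpose_of_trivial]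
    open scoped MatrixOrder in
    exact (CFC.sqrt_nonneg A).posSemidef.1
  have hAdet : IsUnit A.det := (Matrix.isUnit_iff_isUnit_det _).mp hA.isUnit
  have hRdet : IsUnit R.det := by
    have h : R.det * R.det = A.det := by rw [← Matrix.det_mul, hRR]
    exact isUnit_of_mul_isUnit_left (h ▸ hAdet)
  have hR1 : R * R⁻¹ = 1 := Matrix.mul_nonsing_inv _ hRdet
  have hR2 : R⁻¹ * R = 1 := Matrix.nonsing_inv_mul _ hRdet
  have hRinj : ∀ v : Fin n → ℝ, R *ᵥ v = 0 → v = 0 := by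
    intro v hv
    have h : (R⁻¹ * R) *ᵥ v = 0 := by rw [← Matrix.mulVec_mulVec, hv, Matrix.mulVec_zero]
    rwa [hR2, Matrix.one_mulVec] at h
  -- ## the conjugated matrices
  set Fm := R * S with hFm
  set Kp := R * P with hKp
  have hFT : Fmᵀ = Sᵀ * R := by rw [hFm, Matrix.transpose_mul, hRsym]
  have hKpT : Kpᵀ = Pᵀ * R := by rw [hKp, Matrix.transpose_mul, hRsym]
  clear_value Fm Kp
  set As := Sᵀ * A * S with hAsdef
  set G := Pᵀ * A * P with hGdef
  have hAs : Fmᵀ * Fm = As := by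
    rw [hFT, hFm, Matrix.mul_assoc, ← Matrix.mul_assoc R R S, hRR, hAsdef, Matrix.mul_assoc]
  have hKpG : Kpᵀ * Kp = G := by
    rw [hKpT, hKp, Matrix.mul_assoc, ← Matrix.mul_assoc R R P, hRR, hGdef, Matrix.mul_assoc]
  -- injectivity of P
  have hPinj : ∀ x : Fin nc → ℝ, P *ᵥ x = 0 → x = 0 := fun x hx => rank_inj P hP hx
  -- G is positive definite
  have hGpd : G.PosDef := by
    rw [Matrix.posDef_iff_dotProduct_mulVec]
    constructor
    · rw [Matrix.IsHermitian, G.conjTranspose_eq_transpose_of_trivial, hGdef,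
        Matrix.transpose_mul, Matrix.transpose_mul, Matrix.transpose_transpose, hAH,
        Matrix.mul_assoc]
    · intro x hx
      have hPx : P *ᵥ x ≠ 0 := fun h => hx (hPinj x h)
      have h2 := hA.dotProduct_mulVec_pos hPx
      rw [star_trivial] at h2 ⊢
      rw [hGdef, Matrix.mul_assoc, ← Matrix.mulVec_mulVec, ← Matrix.mulVec_mulVec]
      rw [dotProduct_comm, mulVec_dot, Matrix.transpose_transpose]
      rwa [dotProduct_comm] at h2
  have hGsym : Gᵀ = G := by
    rw [hGdef, Matrix.transpose_mul, Matrix.transpose_mul, Matrix.transpose_transpose, hAH,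
      Matrix.mul_assoc]
  clear_value As G
  have hGdet : IsUnit G.det := (Matrix.isUnit_iff_isUnit_det _).mp hGpd.isUnit
  have hG1 : G * G⁻¹ = 1 := Matrix.mul_nonsing_inv _ hGdet
  have hG2 : G⁻¹ * G = 1 := Matrix.nonsing_inv_mul _ hGdet
  have hGiT : (G⁻¹)ᵀ = G⁻¹ := by rw [Matrix.transpose_nonsing_inv, hGsym]
  -- W facts
  set W := Ms + Msᵀ - As with hWdef
  have hWpd : W.PosDef := hMsA
  have hWsym : Wᵀ = W := by
    rw [← W.conjTranspose_eq_transpose_of_trivial]; exact hWpd.1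
  clear_value W
  have hWdet : IsUnit W.det := (Matrix.isUnit_iff_isUnit_det _).mp hWpd.isUnit
  have hW1 : W * W⁻¹ = 1 := Matrix.mul_nonsing_inv _ hWdet
  have hW2 : W⁻¹ * W = 1 := Matrix.nonsing_inv_mul _ hWdet
  -- Ms facts
  have hMsTdet : IsUnit (Msᵀ).det := by rw [Matrix.det_transpose]; exact hMs
  have hMs1 : Ms * Ms⁻¹ = 1 := Matrix.mul_nonsing_inv _ hMs
  have hMs2 : Ms⁻¹ * Ms = 1 := Matrix.nonsing_inv_mul _ hMs
  have hMsT1 : Msᵀ * (Msᵀ)⁻¹ = 1 := Matrix.mul_nonsing_inv _ hMsTdet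
  have hMsT2 : (Msᵀ)⁻¹ * Msᵀ = 1 := Matrix.nonsing_inv_mul _ hMsTdet
  have hMsiT : (Ms⁻¹)ᵀ = (Msᵀ)⁻¹ := Matrix.transpose_nonsing_inv _
  -- Mi = inverse of tMs
  set Mi := Ms⁻¹ * W * (Msᵀ)⁻¹ with hMidef
  have hMiT : Miᵀ = Mi := by
    rw [hMidef, Matrix.transpose_mul, Matrix.transpose_mul, hMsiT, hWsym,
      Matrix.transpose_nonsing_inv, Matrix.transpose_transpose, Matrix.mul_assoc,
      ← Matrix.mul_assoc]
  clear_value Mi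
  have hMt : (tMs Ms (Sᵀ * A * S))⁻¹ = Mi := by
    apply Matrix.inv_eq_right_inv
    rw [← hAsdef]
    show Msᵀ * (Ms + Msᵀ - As)⁻¹ * Ms * Mi = 1
    rw [← hWdef, hMidef]
    simp only [Matrix.mul_assoc]
    rw [← Matrix.mul_assoc Ms Ms⁻¹, hMs1, Matrix.one_mul,
      ← Matrix.mul_assoc W⁻¹ W, hW2, Matrix.one_mul, hMsT1]
  -- the symmetrization identity at the small level
  have hMi : Mi = (Msᵀ)⁻¹ + Ms⁻¹ - Ms⁻¹ * As * (Msᵀ)⁻¹ := by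
    rw [hMidef, hWdef]
    simp only [mul_sub, mul_add, sub_mul, add_mul]
    rw [hMs2, Matrix.one_mul, Matrix.mul_assoc Ms⁻¹ Msᵀ ((Msᵀ)⁻¹), hMsT1, Matrix.mul_one]
  -- the main players
  set N := Fm * Ms⁻¹ * Fmᵀ with hNdef
  set NT := Fm * (Msᵀ)⁻¹ * Fmᵀ with hNTdef
  set X := Fm * Mi * Fmᵀ with hXdef
  set PiB := Kp * G⁻¹ * Kpᵀ with hPiBdef
  clear_value N NT X PiB
  set Q := 1 - PiB with hQdef
  clear_value Q
  set C := Q * X * Q with hCdef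
  clear_value C
  have hNT : Nᵀ = NT := by
    rw [hNdef, hNTdef, Matrix.transpose_mul, Matrix.transpose_mul, Matrix.transpose_transpose,
      hMsiT, Matrix.mul_assoc, ← Matrix.mul_assoc]
  have hXT : Xᵀ = X := by
    rw [hXdef, Matrix.transpose_mul, Matrix.transpose_mul, Matrix.transpose_transpose,
      hMiT, Matrix.mul_assoc, ← Matrix.mul_assoc]
  have hPiT : PiBᵀ = PiB := by
    rw [hPiBdef, Matrix.transpose_mul, Matrix.transpose_mul, Matrix.transpose_transpose,
      hGiT, Matrix.mul_assoc, ← Matrix.mul_assoc]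
  have hQT : Qᵀ = Q := by
    rw [hQdef, Matrix.transpose_sub, Matrix.transpose_one, hPiT]
  have hPiPi : PiB * PiB = PiB := by
    rw [hPiBdef]
    simp only [Matrix.mul_assoc]
    rw [← Matrix.mul_assoc Kpᵀ Kp, hKpG, ← Matrix.mul_assoc G⁻¹ G, hG2, Matrix.one_mul]
  have hQQ : Q * Q = Q := by
    rw [hQdef]
    simp only [mul_sub, sub_mul, mul_one, one_mul]
    rw [hPiPi]
    abel
  have hNNT : N * NT = Fm * (Ms⁻¹ * As * (Msᵀ)⁻¹) * Fmᵀ := by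
    rw [hNdef, hNTdef]
    simp only [Matrix.mul_assoc]
    rw [← Matrix.mul_assoc Fmᵀ Fm, hAs]
  have hX : X = NT + N - N * NT := by
    rw [hNNT, hXdef, hMi, hNdef, hNTdef]
    rw [Matrix.mul_sub, Matrix.sub_mul, Matrix.mul_add, Matrix.add_mul]
  have hLL : (1 - N) * (1 - NT) = 1 - X := by
    simp only [mul_sub, sub_mul, mul_one, one_mul]
    rw [hX]
    abel
  -- ## push identities through R
  have hpushS : ∀ B : Matrix (Fin ns) (Fin ns) ℝ,
      (Fm * B * Fmᵀ) * R = R * (S * B * Sᵀ * A) := by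
    intro B
    rw [hFT, hFm]
    simp only [Matrix.mul_assoc]
    rw [hRR]
  have hpushP : (Kp * G⁻¹ * Kpᵀ) * R = R * (P * G⁻¹ * Pᵀ * A) := by
    rw [hKpT, hKp]
    simp only [Matrix.mul_assoc]
    rw [hRR]
  have hQR : R * (1 - proj A P) = Q * R := by
    show R * (1 - P * (Pᵀ * A * P)⁻¹ * Pᵀ * A) = Q * R
    rw [← hGdef, hQdef, Matrix.mul_sub, Matrix.sub_mul, Matrix.mul_one, Matrix.one_mul]
    congr 1
    rw [hPiBdef, hpushP]
  have hNR : R * (1 - S * Ms⁻¹ * Sᵀ * A) = (1 - N) * R := by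
    rw [Matrix.mul_sub, Matrix.sub_mul, Matrix.mul_one, Matrix.one_mul]
    congr 1
    rw [hNdef, hpushS]
  have hNTR : R * (1 - S * (Msᵀ)⁻¹ * Sᵀ * A) = (1 - NT) * R := by
    rw [Matrix.mul_sub, Matrix.sub_mul, Matrix.mul_one, Matrix.one_mul]
    congr 1
    rw [hNTdef, hpushS]
  have hRE : R * (Etl A S P Ms) = ((1 - NT) * Q * (1 - N)) * R := by
    show R * ((1 - S * (Msᵀ)⁻¹ * Sᵀ * A) * (1 - proj A P) * (1 - S * Ms⁻¹ * Sᵀ * A)) = _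
    rw [Matrix.mul_assoc (1 - S * (Msᵀ)⁻¹ * Sᵀ * A) (1 - proj A P) (1 - S * Ms⁻¹ * Sᵀ * A)]
    rw [← Matrix.mul_assoc R (1 - S * (Msᵀ)⁻¹ * Sᵀ * A) _, hNTR,
      Matrix.mul_assoc (1 - NT) R _, ← Matrix.mul_assoc R (1 - proj A P) _, hQR,
      Matrix.mul_assoc Q R _, hNR]
    simp only [Matrix.mul_assoc]
  have hRX : R * smoothX A S Ms = X * R := by
    show R * (S * (tMs Ms (Sᵀ * A * S))⁻¹ * Sᵀ * A) = X * R
    rw [hMt, hXdef, hpushS]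
  have hRY : R * (smoothX A S Ms * (1 - proj A P)) = (X * Q) * R := by
    rw [← Matrix.mul_assoc, hRX, Matrix.mul_assoc, hQR, ← Matrix.mul_assoc]
  -- ## quadratic-form identities
  have hquadX : ∀ p : Fin n → ℝ, (X *ᵥ p) ⬝ᵥ p =
      (W *ᵥ ((Msᵀ)⁻¹ *ᵥ (Fmᵀ *ᵥ p))) ⬝ᵥ ((Msᵀ)⁻¹ *ᵥ (Fmᵀ *ᵥ p)) := by
    intro p
    rw [hXdef, hMidef]
    simp only [← Matrix.mulVec_mulVec]
    rw [mulVec_dot, mulVec_dot, hMsiT]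
  have hquadC : ∀ z, (C *ᵥ z) ⬝ᵥ z = (X *ᵥ (Q *ᵥ z)) ⬝ᵥ (Q *ᵥ z) := by
    intro z
    rw [hCdef]
    simp only [← Matrix.mulVec_mulVec]
    rw [mulVec_dot, hQT]
  have hWq : ∀ u : Fin ns → ℝ, 0 ≤ (W *ᵥ u) ⬝ᵥ u ∧ ((W *ᵥ u) ⬝ᵥ u = 0 → u = 0) := by
    intro u
    by_cases hu : u = 0
    · subst hu; simp
    · have h := hWpd.dotProduct_mulVec_pos hu
      rw [star_trivial] at h
      rw [dotProduct_comm]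
      exact ⟨le_of_lt h, fun h0 => absurd (h0 ▸ h) (lt_irrefl 0)⟩
  have hpsd : ∀ z, 0 ≤ (C *ᵥ z) ⬝ᵥ z := fun z => by
    rw [hquadC, hquadX]; exact (hWq _).1
  have hCle : ∀ z, (C *ᵥ z) ⬝ᵥ z ≤ z ⬝ᵥ z := by
    intro z
    rw [hquadC]
    have h1 : (X *ᵥ (Q *ᵥ z)) ⬝ᵥ (Q *ᵥ z) ≤ (Q *ᵥ z) ⬝ᵥ (Q *ᵥ z) := by
      have h2 : ((1 - X) *ᵥ (Q *ᵥ z)) ⬝ᵥ (Q *ᵥ z) =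
          ((1 - NT) *ᵥ (Q *ᵥ z)) ⬝ᵥ ((1 - NT) *ᵥ (Q *ᵥ z)) := by
        rw [← hLL, ← Matrix.mulVec_mulVec, mulVec_dot]
        rw [show (1 - N)ᵀ = 1 - NT by
          rw [Matrix.transpose_sub, Matrix.transpose_one, hNT]]
      have h3 : ((1 - X) *ᵥ (Q *ᵥ z)) ⬝ᵥ (Q *ᵥ z) =
          (Q *ᵥ z) ⬝ᵥ (Q *ᵥ z) - (X *ᵥ (Q *ᵥ z)) ⬝ᵥ (Q *ᵥ z) := by
        rw [Matrix.sub_mulVec, sub_dotProduct, Matrix.one_mulVec]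
      have h4 := dot_self_nonneg ((1 - NT) *ᵥ (Q *ᵥ z))
      rw [← h2, h3] at h4
      linarith
    have h5 := proj_dot_le Q hQT hQQ z
    linarith
  have hker : ∀ z, Q *ᵥ z = z → (C *ᵥ z) ⬝ᵥ z = 0 → z = 0 := by
    intro z hQz hz
    rw [hquadC, hQz, hquadX] at hz
    have hu := (hWq _).2 hz
    have hy : Fmᵀ *ᵥ z = 0 := by
      have h9 : Msᵀ *ᵥ ((Msᵀ)⁻¹ *ᵥ (Fmᵀ *ᵥ z)) = 0 := by rw [hu, Matrix.mulVec_zero]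
      rwa [Matrix.mulVec_mulVec, hMsT1, Matrix.one_mulVec] at h9
    have h5 : PiB *ᵥ z = 0 := by
      rw [hQdef, Matrix.sub_mulVec, Matrix.one_mulVec] at hQz
      exact sub_eq_self.mp hQz
    have hPz : Kpᵀ *ᵥ z = 0 := by
      have h6 : Kpᵀ * PiB = Kpᵀ := by
        rw [hPiBdef]
        simp only [← Matrix.mul_assoc]
        rw [hKpG, hG1, Matrix.one_mul]
      rw [← h6, ← Matrix.mulVec_mulVec, h5, Matrix.mulVec_zero]
    have hcomb : (fromCols S P)ᵀ *ᵥ (R *ᵥ z) = 0 := by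
      rw [Matrix.transpose_fromCols, Matrix.fromRows_mulVec]
      have e1 : Sᵀ *ᵥ (R *ᵥ z) = 0 := by rw [Matrix.mulVec_mulVec, ← hFT, hy]
      have e2 : Pᵀ *ᵥ (R *ᵥ z) = 0 := by rw [Matrix.mulVec_mulVec, ← hKpT, hPz]
      rw [e1, e2]
      funext i
      cases i <;> simp
    have hRz : R *ᵥ z = 0 :=
      rank_inj ((fromCols S P)ᵀ) (by rw [Matrix.rank_transpose]; exact hSP) hcomb
    exact hRinj z hRz
  -- ## C is nonzero
  obtain ⟨z0, hz00, hz0⟩ := exists_ker (Pᵀ * R) hnc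
  have hQz0 : Q *ᵥ z0 = z0 := by
    have h7 : PiB *ᵥ z0 = 0 := by
      rw [hPiBdef]
      simp only [← Matrix.mulVec_mulVec]
      rw [hKpT, hz0]
      simp
    rw [hQdef, Matrix.sub_mulVec, Matrix.one_mulVec, h7, sub_zero]
  have hCne : C ≠ 0 := by
    intro h
    have h8 : (C *ᵥ z0) ⬝ᵥ z0 = 0 := by rw [h]; simp
    exact hz00 (hker z0 hQz0 h8)
  -- ## C is symmetric
  have hCsym : C.IsHermitian := by
    rw [Matrix.IsHermitian, C.conjTranspose_eq_transpose_of_trivial, hCdef,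
      Matrix.transpose_mul, Matrix.transpose_mul, hQT, hXT, ← Matrix.mul_assoc]
  have hQC : Q * C = C := by
    rw [hCdef]
    simp only [← Matrix.mul_assoc]
    rw [hQQ]
  have hCQ : C * Q = C := by
    rw [hCdef, Matrix.mul_assoc (Q * X) Q Q, hQQ]
  -- ## apply the core spectral estimate
  obtain ⟨hcpos, hc1, ⟨w0, hw00, hww0, hQw0⟩, hbound⟩ :=
    core_spectral C Q hCsym hQQ hQC hCQ hpsd hCle hker hCne
  set cC := sInf {t : ℝ | t ∈ spectrum ℝ C ∧ 0 < t} with hcCdef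
  -- ## identification of sigmaTL with cC
  have hspecY : spectrum ℝ (smoothX A S Ms * (1 - proj A P)) = spectrum ℝ (X * Q) := by
    have hY : smoothX A S Ms * (1 - proj A P) = R⁻¹ * (X * Q) * R := by
      calc smoothX A S Ms * (1 - proj A P)
          = (R⁻¹ * R) * (smoothX A S Ms * (1 - proj A P)) := by rw [hR2, Matrix.one_mul]
        _ = R⁻¹ * (R * (smoothX A S Ms * (1 - proj A P))) := Matrix.mul_assoc _ _ _
        _ = R⁻¹ * ((X * Q) * R) := by rw [hRY]
        _ = R⁻¹ * (X * Q) * R := (Matrix.mul_assoc _ _ _).symm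
    rw [hY, spec_conj hR2 hR1]
  have hswap : ∀ t : ℝ, 0 < t → (t ∈ spectrum ℝ (X * Q) ↔ t ∈ spectrum ℝ C) := by
    intro t ht
    rw [memSpec_iff_eigen, memSpec_iff_eigen]
    constructor
    · rintro ⟨v, hv0, hv⟩
      refine ⟨Q *ᵥ v, ?_, ?_⟩
      · intro h
        apply hv0
        have h1 : (X * Q) *ᵥ v = 0 := by
          rw [← Matrix.mulVec_mulVec, h, Matrix.mulVec_zero]
        rw [hv] at h1
        exact (smul_eq_zero.mp h1).resolve_left (ne_of_gt ht)
      · rw [hCdef, Matrix.mulVec_mulVec, Matrix.mul_assoc (Q * X) Q Q, hQQ,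
          Matrix.mul_assoc Q X Q, ← Matrix.mulVec_mulVec, hv, Matrix.mulVec_smul]
    · rintro ⟨w, hw0, hw⟩
      have hQw : Q *ᵥ w = w := by
        have h1 : Q *ᵥ (C *ᵥ w) = C *ᵥ w := by rw [Matrix.mulVec_mulVec, hQC]
        rw [hw, Matrix.mulVec_smul] at h1
        exact smul_right_injective _ (ne_of_gt ht) h1
      refine ⟨X *ᵥ w, ?_, ?_⟩
      · intro h
        apply hw0
        have h2 : C *ᵥ w = 0 := by
          rw [hCdef, Matrix.mul_assoc, ← Matrix.mulVec_mulVec, ← Matrix.mulVec_mulVec,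
            hQw, h, Matrix.mulVec_zero]
        rw [hw] at h2
        exact (smul_eq_zero.mp h2).resolve_left (ne_of_gt ht)
      · have h4 : C *ᵥ w = Q *ᵥ (X *ᵥ (Q *ᵥ w)) := by
          rw [hCdef]; simp only [← Matrix.mulVec_mulVec]
        rw [hQw] at h4
        have h3 : Q *ᵥ (X *ᵥ w) = t • w := by rw [← h4, hw]
        rw [← Matrix.mulVec_mulVec, h3, Matrix.mulVec_smul]
  have hsig : sigmaTL A S P Ms = cC := by
    show lamMinPos (smoothX A S Ms * (1 - proj A P)) = cC
    unfold lamMinPos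
    rw [hcCdef]
    congr 1
    ext t
    simp only [Set.mem_setOf_eq]
    constructor
    · rintro ⟨h, hpos⟩
      exact ⟨(hswap t hpos).mp (by rwa [hspecY] at h), hpos⟩
    · rintro ⟨h, hpos⟩
      exact ⟨by rw [hspecY]; exact (hswap t hpos).mpr h, hpos⟩
  -- ## the norm computation
  set Eb := (1 - NT) * Q * (1 - N) with hEbdef
  set K := Q * (1 - N) with hKdef
  have hKT : Kᵀ = (1 - NT) * Q := by
    rw [hKdef, Matrix.transpose_mul, hQT, Matrix.transpose_sub, Matrix.transpose_one, hNT]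
  have hEbK : Eb = Kᵀ * K := by
    rw [hEbdef, hKT, hKdef]
    simp only [Matrix.mul_assoc]
    rw [← Matrix.mul_assoc Q Q (1 - N), hQQ]
  have hKKT : K * Kᵀ = Q - C := by
    rw [hKdef, hKT]
    simp only [Matrix.mul_assoc]
    rw [← Matrix.mul_assoc (1 - N) (1 - NT) Q, hLL, sub_mul, one_mul, mul_sub, hQQ,
      ← Matrix.mul_assoc Q X Q, ← hCdef]
  have hbound2 : ∀ w, (Eb *ᵥ w) ⬝ᵥ (Eb *ᵥ w) ≤ (1 - cC)^2 * (w ⬝ᵥ w) := by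
    intro w
    set u := K *ᵥ w with hu
    have h1 : Eb *ᵥ w = Kᵀ *ᵥ u := by rw [hEbK, hu, Matrix.mulVec_mulVec]
    have h2 : (Eb *ᵥ w) ⬝ᵥ (Eb *ᵥ w) = ((Q - C) *ᵥ u) ⬝ᵥ u := by
      rw [h1, mulVec_dot, Matrix.transpose_transpose, Matrix.mulVec_mulVec, hKKT,
        dotProduct_comm]
    have h4 : u ⬝ᵥ u = (Eb *ᵥ w) ⬝ᵥ w := by
      rw [hu, mulVec_dot, Matrix.mulVec_mulVec, ← hEbK, dotProduct_comm]
    have hs0 : 0 ≤ (Eb *ᵥ w) ⬝ᵥ (Eb *ᵥ w) := dot_self_nonneg _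
    have hr0 : 0 ≤ w ⬝ᵥ w := dot_self_nonneg _
    have h5 : (Eb *ᵥ w) ⬝ᵥ w ≤
        Real.sqrt ((Eb *ᵥ w) ⬝ᵥ (Eb *ᵥ w)) * Real.sqrt (w ⬝ᵥ w) := by
      calc (Eb *ᵥ w) ⬝ᵥ w ≤ |(Eb *ᵥ w) ⬝ᵥ w| := le_abs_self _
        _ = Real.sqrt (((Eb *ᵥ w) ⬝ᵥ w)^2) := (Real.sqrt_sq_eq_abs _).symm
        _ ≤ Real.sqrt (((Eb *ᵥ w) ⬝ᵥ (Eb *ᵥ w)) * (w ⬝ᵥ w)) :=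
            Real.sqrt_le_sqrt (cs_dot (Eb *ᵥ w) w)
        _ = Real.sqrt ((Eb *ᵥ w) ⬝ᵥ (Eb *ᵥ w)) * Real.sqrt (w ⬝ᵥ w) :=
            Real.sqrt_mul hs0 _
    have h9 : (Eb *ᵥ w) ⬝ᵥ (Eb *ᵥ w) ≤
        (1 - cC) * (Real.sqrt ((Eb *ᵥ w) ⬝ᵥ (Eb *ᵥ w)) * Real.sqrt (w ⬝ᵥ w)) := by
      calc (Eb *ᵥ w) ⬝ᵥ (Eb *ᵥ w) = ((Q - C) *ᵥ u) ⬝ᵥ u := h2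
        _ ≤ (1 - cC) * (u ⬝ᵥ u) := hbound u
        _ = (1 - cC) * ((Eb *ᵥ w) ⬝ᵥ w) := by rw [h4]
        _ ≤ (1 - cC) * (Real.sqrt ((Eb *ᵥ w) ⬝ᵥ (Eb *ᵥ w)) * Real.sqrt (w ⬝ᵥ w)) :=
            mul_le_mul_of_nonneg_left h5 (by linarith)
    by_cases hsz : Real.sqrt ((Eb *ᵥ w) ⬝ᵥ (Eb *ᵥ w)) = 0
    · have h10 : (Eb *ᵥ w) ⬝ᵥ (Eb *ᵥ w) ≤ 0 := Real.sqrt_eq_zero'.mp hsz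
      have h11 : (0:ℝ) ≤ (1 - cC)^2 * (w ⬝ᵥ w) := mul_nonneg (sq_nonneg _) hr0
      linarith
    · have hsqp : 0 < Real.sqrt ((Eb *ᵥ w) ⬝ᵥ (Eb *ᵥ w)) :=
        lt_of_le_of_ne (Real.sqrt_nonneg _) (Ne.symm hsz)
      have h10 : Real.sqrt ((Eb *ᵥ w) ⬝ᵥ (Eb *ᵥ w)) ≤ (1 - cC) * Real.sqrt (w ⬝ᵥ w) := by
        have h11 : Real.sqrt ((Eb *ᵥ w) ⬝ᵥ (Eb *ᵥ w)) * Real.sqrt ((Eb *ᵥ w) ⬝ᵥ (Eb *ᵥ w)) ≤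
            ((1 - cC) * Real.sqrt (w ⬝ᵥ w)) * Real.sqrt ((Eb *ᵥ w) ⬝ᵥ (Eb *ᵥ w)) := by
          rw [Real.mul_self_sqrt hs0]
          calc (Eb *ᵥ w) ⬝ᵥ (Eb *ᵥ w)
              ≤ (1 - cC) * (Real.sqrt ((Eb *ᵥ w) ⬝ᵥ (Eb *ᵥ w)) * Real.sqrt (w ⬝ᵥ w)) := h9
            _ = ((1 - cC) * Real.sqrt (w ⬝ᵥ w)) * Real.sqrt ((Eb *ᵥ w) ⬝ᵥ (Eb *ᵥ w)) := by ring
        exact le_of_mul_le_mul_right h11 hsqp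
      calc (Eb *ᵥ w) ⬝ᵥ (Eb *ᵥ w)
          = Real.sqrt ((Eb *ᵥ w) ⬝ᵥ (Eb *ᵥ w)) * Real.sqrt ((Eb *ᵥ w) ⬝ᵥ (Eb *ᵥ w)) :=
            (Real.mul_self_sqrt hs0).symm
        _ ≤ ((1 - cC) * Real.sqrt (w ⬝ᵥ w)) * ((1 - cC) * Real.sqrt (w ⬝ᵥ w)) :=
            mul_self_le_mul_self (Real.sqrt_nonneg _) h10
        _ = (1 - cC)^2 * (Real.sqrt (w ⬝ᵥ w) * Real.sqrt (w ⬝ᵥ w)) := by ring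
        _ = (1 - cC)^2 * (w ⬝ᵥ w) := by rw [Real.mul_self_sqrt hr0]
  -- transport the norms through R
  have hEnorm : ∀ v, eNorm A v = Real.sqrt ((R *ᵥ v) ⬝ᵥ (R *ᵥ v)) := by
    intro v
    show Real.sqrt (v ⬝ᵥ A *ᵥ v) = _
    congr 1
    exact (by rw [mulVec_dot, hRsym, Matrix.mulVec_mulVec, hRR] :
      (R *ᵥ v) ⬝ᵥ (R *ᵥ v) = v ⬝ᵥ A *ᵥ v).symm
  have hEnum : ∀ v, eNorm A ((Etl A S P Ms) *ᵥ v) =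
      Real.sqrt ((Eb *ᵥ (R *ᵥ v)) ⬝ᵥ (Eb *ᵥ (R *ᵥ v))) := by
    intro v
    rw [hEnorm]
    have h1 : R *ᵥ ((Etl A S P Ms) *ᵥ v) = Eb *ᵥ (R *ᵥ v) := by
      rw [Matrix.mulVec_mulVec, hRE, ← Matrix.mulVec_mulVec]
    rw [h1]
  have hdenpos : ∀ v : Fin n → ℝ, v ≠ 0 → 0 < (R *ᵥ v) ⬝ᵥ (R *ᵥ v) := by
    intro v hv
    have h1 : R *ᵥ v ≠ 0 := fun h => hv (hRinj v h)
    rcases lt_or_eq_of_le (dot_self_nonneg (R *ᵥ v)) with h | h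
    · exact h
    · exact absurd (dotProduct_self_eq_zero.mp h.symm) h1
  have hub : ∀ r ∈ {r : ℝ | ∃ v : Fin n → ℝ, v ≠ 0 ∧
      r = eNorm A ((Etl A S P Ms) *ᵥ v) / eNorm A v}, r ≤ 1 - cC := by
    rintro r ⟨v, hv0, rfl⟩
    rw [hEnum, hEnorm]
    have hwpos := hdenpos v hv0
    rw [div_le_iff₀ (Real.sqrt_pos.mpr hwpos)]
    calc Real.sqrt ((Eb *ᵥ (R *ᵥ v)) ⬝ᵥ (Eb *ᵥ (R *ᵥ v)))
        ≤ Real.sqrt ((1 - cC)^2 * ((R *ᵥ v) ⬝ᵥ (R *ᵥ v))) :=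
          Real.sqrt_le_sqrt (hbound2 (R *ᵥ v))
      _ = (1 - cC) * Real.sqrt ((R *ᵥ v) ⬝ᵥ (R *ᵥ v)) := by
          rw [Real.sqrt_mul (sq_nonneg _), Real.sqrt_sq (by linarith)]
  have hKNT : K *ᵥ ((1 - NT) *ᵥ w0) = (1 - cC) • w0 := by
    have hQXw0 : (Q * X) *ᵥ w0 = cC • w0 := by
      have e : (Q * X * Q) *ᵥ w0 = (Q * X) *ᵥ w0 := by
        rw [← Matrix.mulVec_mulVec, hQw0]
      rw [← e, ← hCdef, hww0]
    rw [Matrix.mulVec_mulVec, hKdef, Matrix.mul_assoc Q (1 - N) (1 - NT), hLL,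
      mul_sub, mul_one, Matrix.sub_mulVec, hQw0, hQXw0, sub_smul, one_smul]
  have hmem : (1 - cC) ∈ {r : ℝ | ∃ v : Fin n → ℝ, v ≠ 0 ∧
      r = eNorm A ((Etl A S P Ms) *ᵥ v) / eNorm A v} := by
    have hEnn : ∀ x, (0:ℝ) ≤ eNorm A x := fun x => Real.sqrt_nonneg _
    by_cases hcase : (1 - NT) *ᵥ w0 = 0
    · have h1 : (1 - cC) • w0 = 0 := by rw [← hKNT, hcase, Matrix.mulVec_zero]
      have h2 : 1 - cC = 0 := by
        rcases smul_eq_zero.mp h1 with h | h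
        · exact h
        · exact absurd h hw00
      have hv0 : R⁻¹ *ᵥ w0 ≠ 0 := by
        intro h
        apply hw00
        have h3 : R *ᵥ (R⁻¹ *ᵥ w0) = 0 := by rw [h, Matrix.mulVec_zero]
        rwa [Matrix.mulVec_mulVec, hR1, Matrix.one_mulVec] at h3
      refine ⟨R⁻¹ *ᵥ w0, hv0, ?_⟩
      have hrle := hub _ ⟨R⁻¹ *ᵥ w0, hv0, rfl⟩
      rw [h2] at hrle ⊢
      have hrge : 0 ≤ eNorm A ((Etl A S P Ms) *ᵥ (R⁻¹ *ᵥ w0)) / eNorm A (R⁻¹ *ᵥ w0) :=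
        div_nonneg (hEnn _) (hEnn _)
      linarith
    · set v1 := R⁻¹ *ᵥ ((1 - NT) *ᵥ w0) with hv1
      have hRv1 : R *ᵥ v1 = (1 - NT) *ᵥ w0 := by
        rw [hv1, Matrix.mulVec_mulVec, hR1, Matrix.one_mulVec]
      have hv10 : v1 ≠ 0 := by
        intro h
        apply hcase
        rw [← hRv1, h, Matrix.mulVec_zero]
      have hEbv : Eb *ᵥ (R *ᵥ v1) = (1 - cC) • (R *ᵥ v1) := by
        rw [hRv1, hEbK, ← Matrix.mulVec_mulVec, hKNT, Matrix.mulVec_smul]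
        congr 1
        rw [hKT, ← Matrix.mulVec_mulVec, hQw0]
      refine ⟨v1, hv10, ?_⟩
      rw [hEnum, hEnorm, hEbv]
      have hwpos := hdenpos v1 hv10
      rw [smul_dotProduct, dotProduct_smul, smul_eq_mul, smul_eq_mul, ← mul_assoc]
      rw [show (1 - cC) * (1 - cC) * ((R *ᵥ v1) ⬝ᵥ (R *ᵥ v1)) =
        (1 - cC)^2 * ((R *ᵥ v1) ⬝ᵥ (R *ᵥ v1)) by ring]
      rw [Real.sqrt_mul (sq_nonneg _), Real.sqrt_sq (by linarith)]
      rw [mul_div_assoc, div_self (ne_of_gt (Real.sqrt_pos.mpr hwpos)), mul_one]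
  rw [hsig]
  show sSup {r : ℝ | ∃ v : Fin n → ℝ, v ≠ 0 ∧
      r = eNorm A ((Etl A S P Ms) *ᵥ v) / eNorm A v} = 1 - cC
  exact le_antisymm (csSup_le ⟨1 - cC, hmem⟩ hub) (le_csSup ⟨1 - cC, hub⟩ hmem)
end

section
/- Under the stated assumptions, the spectrum of the exact TLHB iteration matrix E_TL is exactly {0 (with multiplicity n_c), 1 − ν_1, …, 1 − ν_{n−n_c}}, where ν_1, …, ν_{n−n_c} are the positive eigenvalues (counted with multiplicity) of M̃_s^{-1} S^T A (I − Π_A) S. -/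
open Matrix Polynomial

lemma evalCharpoly {m : Type*} [Fintype m] [DecidableEq m] (M : Matrix m m ℝ) (x : ℝ) :
    (M.charpoly).eval x = (x • (1 : Matrix m m ℝ) - M).det := by
  rw [Matrix.charpoly, ← Polynomial.coe_evalRingHom, RingHom.map_det]
  congr 1
  ext i j
  by_cases h : i = j <;>
    simp [h, Matrix.charmatrix_apply, Matrix.one_apply, Matrix.diagonal_apply]

lemma charpolyRect {m l : Type*} [Fintype m] [DecidableEq m] [Fintype l] [DecidableEq l]
    (F : Matrix m l ℝ) (G : Matrix l m ℝ) :
    X ^ (Fintype.card l) * (F * G).charpoly = X ^ (Fintype.card m) * (G * F).charpoly := by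
  apply Polynomial.eq_of_infinite_eval_eq
  apply Set.Infinite.mono (s := {(0:ℝ)}ᶜ)
  · intro x hx
    have hx0 : (x:ℝ) ≠ 0 := hx
    simp only [Set.mem_setOf_eq, eval_mul, eval_pow, eval_X, evalCharpoly]
    have h1 : x • (1 : Matrix m m ℝ) - F * G = x • ((1 : Matrix m m ℝ) - F * (x⁻¹ • G)) := by
      rw [smul_sub, Matrix.mul_smul, smul_smul, mul_inv_cancel₀ hx0, one_smul]
    have h2 : x • (1 : Matrix l l ℝ) - G * F = x • ((1 : Matrix l l ℝ) - (x⁻¹ • G) * F) := by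
      rw [smul_sub, Matrix.smul_mul, smul_smul, mul_inv_cancel₀ hx0, one_smul]
    rw [h1, h2, Matrix.det_smul, Matrix.det_smul, Matrix.det_one_sub_mul_comm]
    ring
  · exact (Set.finite_singleton 0).infinite_compl

lemma charpolyComm {m : Type*} [Fintype m] [DecidableEq m] (M N : Matrix m m ℝ) :
    (M * N).charpoly = (N * M).charpoly :=
  mul_left_cancel₀ (pow_ne_zero _ Polynomial.X_ne_zero) (charpolyRect M N)

lemma charpolyDiagonal {k : ℕ} (d : Fin k → ℝ) :
    (Matrix.diagonal d).charpoly = ∏ i, (X - C (d i)) := by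
  rw [Matrix.charpoly_of_upperTriangular _ (Matrix.blockTriangular_diagonal d)]
  simp

lemma charpolyOne {k : ℕ} : (1 : Matrix (Fin k) (Fin k) ℝ).charpoly = (X - C 1) ^ k := by
  have : (1 : Matrix (Fin k) (Fin k) ℝ) = Matrix.diagonal (fun _ => (1:ℝ)) := by
    simp [Matrix.diagonal_one]
  rw [this, charpolyDiagonal]
  simp

lemma rootsCharpolyHermitian {k : ℕ} (M : Matrix (Fin k) (Fin k) ℝ) (hM : M.IsHermitian) :
    M.charpoly.roots = Finset.univ.val.map hM.eigenvalues := by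
  have hdiag : star (hM.eigenvectorUnitary : Matrix (Fin k) (Fin k) ℝ) * M *
      (hM.eigenvectorUnitary : Matrix (Fin k) (Fin k) ℝ) =
      Matrix.diagonal (RCLike.ofReal ∘ hM.eigenvalues) := by
    have hs : M = (hM.eigenvectorUnitary : Matrix (Fin k) (Fin k) ℝ) *
        Matrix.diagonal (RCLike.ofReal ∘ hM.eigenvalues) *
        star (hM.eigenvectorUnitary : Matrix (Fin k) (Fin k) ℝ) := by
      simpa using hM.spectral_theorem
    refine (congrArg (fun X => star (hM.eigenvectorUnitary : Matrix (Fin k) (Fin k) ℝ) * X *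
      (hM.eigenvectorUnitary : Matrix (Fin k) (Fin k) ℝ)) hs).trans ?_
    simp only [← Matrix.mul_assoc, Unitary.coe_star_mul_self, Matrix.one_mul]
    simp only [Matrix.mul_assoc, Unitary.coe_star_mul_self, Matrix.mul_one]
  set V : Matrix (Fin k) (Fin k) ℝ := (hM.eigenvectorUnitary : Matrix (Fin k) (Fin k) ℝ) with hV
  have hVV : V * star V = 1 := (Matrix.mem_unitaryGroup_iff).mp hM.eigenvectorUnitary.2
  have h1 : (Matrix.diagonal (RCLike.ofReal ∘ hM.eigenvalues)).charpoly = M.charpoly := by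
    rw [← hdiag, charpolyComm (star V * M) V, ← mul_assoc, hVV, one_mul]
  have h2 : (RCLike.ofReal ∘ hM.eigenvalues : Fin k → ℝ) = hM.eigenvalues := by
    funext i; simp
  rw [← h1, h2, charpolyDiagonal]
  have h3 : (∏ i, (X - C (hM.eigenvalues i))) =
      ((Finset.univ.val.map hM.eigenvalues).map fun a => X - C a).prod := by
    simp [Finset.prod, Multiset.map_map, Function.comp_def]
  rw [h3, Polynomial.roots_multiset_prod_X_sub_C]

lemma rootsOneSub {k : ℕ} (M : Matrix (Fin k) (Fin k) ℝ)
    (h : M.charpoly.roots.card = k) :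
    (1 - M).charpoly.roots = M.charpoly.roots.map (fun r => 1 - r) := by
  have hM : (M.charpoly.roots.map fun a => X - C a).prod = M.charpoly :=
    Polynomial.prod_multiset_X_sub_C_of_monic_of_roots_card_eq (Matrix.charpoly_monic M)
      (by rw [h, Matrix.charpoly_natDegree_eq_dim]; simp)
  have key : (1 - M).charpoly =
      (((M.charpoly.roots.map (fun r => (1:ℝ) - r))).map fun a => X - C a).prod := by
    apply Polynomial.funext
    intro x
    rw [evalCharpoly]
    have e1 : x • (1 : Matrix (Fin k) (Fin k) ℝ) - (1 - M) =
        -(((1 - x) • (1 : Matrix (Fin k) (Fin k) ℝ)) - M) := by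
      rw [sub_smul, one_smul]; abel
    set s : Multiset ℝ := M.charpoly.roots with hs
    rw [e1, Matrix.det_neg, ← evalCharpoly, ← hM]
    rw [Polynomial.eval_multiset_prod, Polynomial.eval_multiset_prod]
    simp only [Multiset.map_map, Function.comp_apply, Polynomial.eval_sub,
      Polynomial.eval_X, Polynomial.eval_C]
    have e2 : (M.charpoly.roots.map fun a => (1 - x) - a)
        = (M.charpoly.roots.map fun a => x - (1 - a)).map Neg.neg := by
      rw [Multiset.map_map]; congr 1; funext a; simp [Function.comp]; ring
    rw [e2, Multiset.prod_map_neg]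
    simp only [Multiset.card_map, h, Fintype.card_fin]
    rw [← mul_assoc, ← pow_add, show M.charpoly.roots.card = k from h, Even.neg_one_pow ⟨k, rfl⟩, one_mul]
  rw [key, Polynomial.roots_multiset_prod_X_sub_C]

lemma mulVecInj {m l : Type*} [Fintype m] [Fintype l] [DecidableEq l]
    (B : Matrix m l ℝ) (hB : B.rank = Fintype.card l) :
    ∀ x : l → ℝ, B *ᵥ x = 0 → x = 0 := by
  intro x hx
  have h1 := LinearMap.finrank_range_add_finrank_ker B.mulVecLin
  rw [Module.finrank_fintype_fun_eq_card] at h1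
  have h2 : Module.finrank ℝ (LinearMap.ker B.mulVecLin) = 0 := by
    have : B.rank = Module.finrank ℝ (LinearMap.range B.mulVecLin) := rfl
    omega
  have h3 : LinearMap.ker B.mulVecLin = ⊥ := Submodule.finrank_eq_zero.mp h2
  have : x ∈ LinearMap.ker B.mulVecLin := by
    simpa [Matrix.mulVecLin_apply] using hx
  rw [h3] at this
  simpa using this

lemma posDefConj {m l : Type*} [Fintype m] [Fintype l] [DecidableEq m] [DecidableEq l]
    {A : Matrix m m ℝ} (hA : A.PosDef) (B : Matrix m l ℝ)
    (hB : ∀ x : l → ℝ, B *ᵥ x = 0 → x = 0) : (Bᵀ * A * B).PosDef := by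
  refine Matrix.PosDef.of_dotProduct_mulVec_pos ?_ ?_
  · have := Matrix.isHermitian_conjTranspose_mul_mul B hA.1
    simpa [Matrix.conjTranspose_eq_transpose_of_trivial] using this
  · intro x hx
    have hBx : B *ᵥ x ≠ 0 := fun h => hx (hB x h)
    have := hA.dotProduct_mulVec_pos hBx
    simpa [star_trivial, ← Matrix.mulVec_mulVec, Matrix.dotProduct_mulVec,
      Matrix.vecMul_transpose] using this

lemma rankSurjMul {m l : Type*} [Fintype m] [Fintype l] [DecidableEq m] [DecidableEq l]
    (E : Matrix m m ℝ) (M : Matrix m l ℝ) (hM : M.rank = Fintype.card m) :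
    (E * M).rank = E.rank := by
  have htop : LinearMap.range M.mulVecLin = ⊤ := by
    apply Submodule.eq_top_of_finrank_eq
    rw [Module.finrank_fintype_fun_eq_card]
    exact hM
  unfold Matrix.rank
  rw [Matrix.mulVecLin_mul, LinearMap.range_comp, htop, Submodule.map_top]

lemma rankFromColumnsZero {m n₁ n₂ : Type*} [Fintype m] [Fintype n₁] [Fintype n₂]
    [DecidableEq n₁] [DecidableEq n₂]
    (B : Matrix m n₁ ℝ) :
    (Matrix.fromCols B (0 : Matrix m n₂ ℝ)).rank = B.rank := by
  apply le_antisymm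
  · have h1 : Matrix.fromCols B (0 : Matrix m n₂ ℝ) =
        B * Matrix.fromCols (1 : Matrix n₁ n₁ ℝ) (0 : Matrix n₁ n₂ ℝ) := by
      rw [Matrix.mul_fromCols]; rw [Matrix.mul_one, Matrix.mul_zero]
    rw [h1]
    exact Matrix.rank_mul_le_left _ _
  · have h2 : B = Matrix.fromCols B (0 : Matrix m n₂ ℝ) *
        Matrix.fromRows (1 : Matrix n₁ n₁ ℝ) (0 : Matrix n₂ n₁ ℝ) := by
      rw [Matrix.fromCols_mul_fromRows]; rw [Matrix.mul_one, Matrix.zero_mul, add_zero]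
    conv_lhs => rw [h2]
    exact Matrix.rank_mul_le_left _ _

lemma rankOneSub {m : Type*} [Fintype m] [DecidableEq m]
    (Q : Matrix m m ℝ) (h2 : Q * Q = Q) :
    (1 - Q).rank = Fintype.card m - Q.rank := by
  have hker : LinearMap.ker (1 - Q).mulVecLin = LinearMap.range Q.mulVecLin := by
    ext x
    simp only [LinearMap.mem_ker, LinearMap.mem_range, Matrix.mulVecLin_apply]
    constructor
    · intro hx
      refine ⟨x, ?_⟩
      have : x - Q *ᵥ x = 0 := by
        simpa [Matrix.sub_mulVec, Matrix.one_mulVec] using hx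
      have := sub_eq_zero.mp this
      exact this.symm
    · rintro ⟨y, rfl⟩
      have : (1 - Q) *ᵥ (Q *ᵥ y) = ((1 - Q) * Q) *ᵥ y := by
        rw [Matrix.mulVec_mulVec]
      rw [this, Matrix.sub_mul, one_mul, h2, sub_self, Matrix.zero_mulVec]
  have h1 := LinearMap.finrank_range_add_finrank_ker (1 - Q).mulVecLin
  rw [Module.finrank_fintype_fun_eq_card, hker] at h1
  have e1 : (1 - Q).rank = Module.finrank ℝ (LinearMap.range (1 - Q).mulVecLin) := rfl
  have e2 : Q.rank = Module.finrank ℝ (LinearMap.range Q.mulVecLin) := rfl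
  omega

lemma psdRoots {k : ℕ} (H : Matrix (Fin k) (Fin k) ℝ) (hH : H.PosSemidef) :
    H.charpoly.roots =
      Multiset.replicate (k - H.rank) 0 + (H.charpoly.roots.filter (fun x => 0 < x)) ∧
    (H.charpoly.roots.filter (fun x => 0 < x)).card = H.rank := by
  have hroots := rootsCharpolyHermitian H hH.1
  have hnn : ∀ i, 0 ≤ hH.1.eigenvalues i := fun i => hH.eigenvalues_nonneg i
  have hrank := hH.1.rank_eq_card_non_zero_eigs
  have hcardpos : (H.charpoly.roots.filter (fun x => 0 < x)).card = H.rank := by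
    rw [hroots, ← Multiset.countP_eq_card_filter, Multiset.countP_map]
    rw [hrank]
    have : Fintype.card {i // hH.1.eigenvalues i ≠ 0} =
        Fintype.card {i // 0 < hH.1.eigenvalues i} := by
      apply Fintype.card_congr
      apply Equiv.subtypeEquivRight
      intro i
      constructor
      · intro h; exact lt_of_le_of_ne (hnn i) (Ne.symm h)
      · intro h; exact ne_of_gt h
    rw [this, Fintype.card_subtype]
    rfl
  refine ⟨?_, hcardpos⟩
  have hsplit := Multiset.filter_add_not (fun x => 0 < x) H.charpoly.roots
  have hnonpos : H.charpoly.roots.filter (fun x => ¬ 0 < x) =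
      Multiset.replicate (k - H.rank) 0 := by
    apply Multiset.eq_replicate.mpr
    constructor
    · have hcard : Multiset.card H.charpoly.roots = k := by
        rw [hroots, Multiset.card_map]
        simp
      have h2 := congrArg Multiset.card hsplit
      rw [Multiset.card_add] at h2
      omega
    · intro b hb
      rw [Multiset.mem_filter] at hb
      obtain ⟨hb1, hb2⟩ := hb
      rw [hroots, Multiset.mem_map] at hb1
      obtain ⟨i, _, rfl⟩ := hb1
      exact le_antisymm (not_lt.mp hb2) (hnn i)
  calc H.charpoly.roots
      = H.charpoly.roots.filter (fun x => ¬ 0 < x) +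
        H.charpoly.roots.filter (fun x => 0 < x) := by
        rw [add_comm]; exact hsplit.symm
    _ = _ := by rw [hnonpos]

/-- Corollary: the spectrum of `E_TL` is `{0 (multiplicity n_c), 1 - ν_1, …, 1 - ν_{n-n_c}}`,
where the `ν_i` are the positive eigenvalues (with multiplicity) of
`M̃_s⁻¹ Sᵀ A (I - Π_A) S`. -/
theorem spectrum_Etl {n ns nc : ℕ}
    (A : Matrix (Fin n) (Fin n) ℝ) (hA : A.PosDef)
    (S : Matrix (Fin n) (Fin ns) ℝ) (hS : S.rank = ns)
    (P : Matrix (Fin n) (Fin nc) ℝ) (hP : P.rank = nc)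
    (hns : ns < n) (hnc : nc < n) (hsum : n ≤ ns + nc)
    (hSP : (fromCols S P).rank = n)
    (Ms : Matrix (Fin ns) (Fin ns) ℝ) (hMs : IsUnit Ms.det)
    (hMsA : (Ms + Msᵀ - Sᵀ * A * S).PosDef) :
    (Etl A S P Ms).charpoly.roots =
      Multiset.replicate nc 0 +
        ((((tMs Ms (Sᵀ * A * S))⁻¹ * (Sᵀ * A * (1 - proj A P) * S)).charpoly.roots.filter
          (fun x => 0 < x)).map (fun ν => 1 - ν)) := by
  -- ## Notation
  set As : Matrix (Fin ns) (Fin ns) ℝ := Sᵀ * A * S with hAs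
  set Ac : Matrix (Fin nc) (Fin nc) ℝ := Pᵀ * A * P with hAc
  set Pi : Matrix (Fin n) (Fin n) ℝ := proj A P with hPidef
  set tM : Matrix (Fin ns) (Fin ns) ℝ := tMs Ms As with htMdef
  set Xh : Matrix (Fin n) (Fin n) ℝ := smoothX A S Ms with hXhdef
  set Y : Matrix (Fin ns) (Fin ns) ℝ := tM⁻¹ * (Sᵀ * A * (1 - Pi) * S) with hYdef
  set Z : Matrix (Fin n) (Fin n) ℝ := Pi + Xh * (1 - Pi) with hZdef
  -- ## Basic symmetric / unit facts
  have hAt : Aᵀ = A := by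
    rw [← Matrix.conjTranspose_eq_transpose_of_trivial]; exact hA.1
  have hMsT : IsUnit (Msᵀ).det := by rwa [Matrix.det_transpose]
  have hWmPD : (Ms + Msᵀ - As).PosDef := hMsA
  have hWm : IsUnit (Ms + Msᵀ - As).det := hWmPD.det_pos.ne'.isUnit
  have hMsInj : ∀ x : Fin ns → ℝ, Ms *ᵥ x = 0 → x = 0 := by
    intro x hx
    have := congrArg (fun v => Ms⁻¹ *ᵥ v) hx
    simpa [Matrix.mulVec_mulVec, Matrix.nonsing_inv_mul Ms hMs] using this
  have hPInj : ∀ x : Fin nc → ℝ, P *ᵥ x = 0 → x = 0 :=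
    mulVecInj P (by rw [hP]; simp)
  have hAcPD : Ac.PosDef := posDefConj hA P hPInj
  have hAcU : IsUnit Ac.det := hAcPD.det_pos.ne'.isUnit
  have htMPD : tM.PosDef := by
    rw [htMdef]
    exact posDefConj hWmPD.inv Ms hMsInj
  have htMU : IsUnit tM.det := htMPD.det_pos.ne'.isUnit
  -- ## Projection facts
  have hG1P : (Ac⁻¹ * (Pᵀ * A)) * P = 1 := by
    rw [Matrix.mul_assoc]
    have : Pᵀ * A * P = (Pᵀ * A) * P := by rw [Matrix.mul_assoc]
    rw [hAc, this, Matrix.nonsing_inv_mul _ (by rw [hAc, this] at hAcU; exact hAcU)]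
  have hPieq : Pi = P * (Ac⁻¹ * (Pᵀ * A)) := by
    rw [hPidef]
    show P * Ac⁻¹ * Pᵀ * A = _
    simp only [Matrix.mul_assoc]
  have hPiP : Pi * P = P := by
    rw [hPieq, Matrix.mul_assoc, hG1P, Matrix.mul_one]
  have hPi2 : Pi * Pi = Pi := by
    nth_rewrite 2 [hPieq]
    rw [← Matrix.mul_assoc, hPiP, ← hPieq]
  have hEP : (1 - Pi) * P = 0 := by
    rw [Matrix.sub_mul, Matrix.one_mul, hPiP, sub_self]
  have hPiT : Piᵀ * A = A * Pi := by
    rw [hPidef]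
    show (P * Ac⁻¹ * Pᵀ * A)ᵀ * A = A * (P * Ac⁻¹ * Pᵀ * A)
    have hAcT : Acᵀ = Ac := by rw [hAc]; simp [Matrix.transpose_mul, Matrix.mul_assoc, hAt]
    simp only [Matrix.transpose_mul, Matrix.transpose_nonsing_inv, hAcT, hAt,
      Matrix.transpose_transpose, Matrix.mul_assoc]
  have hAE : (1 - Pi)ᵀ * A * (1 - Pi) = A * (1 - Pi) := by
    have h1 : (1 - Pi)ᵀ = 1 - Piᵀ := by rw [Matrix.transpose_sub, Matrix.transpose_one]
    rw [h1, Matrix.sub_mul, Matrix.one_mul, Matrix.sub_mul, hPiT]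
    have h2 : A * Pi * (1 - Pi) = 0 := by
      rw [Matrix.mul_assoc, Matrix.mul_sub, Matrix.mul_one, hPi2, sub_self, Matrix.mul_zero]
    rw [h2, sub_zero]
  -- ## charpoly Etl = charpoly (1 - Z)
  have hcpE : (Etl A S P Ms).charpoly = (1 - Z).charpoly := by
    have htMinv : tM⁻¹ = (Msᵀ)⁻¹ + Ms⁻¹ - Ms⁻¹ * As * (Msᵀ)⁻¹ := by
      rw [htMdef]
      show (Msᵀ * (Ms + Msᵀ - As)⁻¹ * Ms)⁻¹ = _
      rw [Matrix.mul_inv_rev, Matrix.mul_inv_rev,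
        Matrix.nonsing_inv_nonsing_inv _ hWm]
      have : (Ms + Msᵀ - As) * (Msᵀ)⁻¹ = Ms * (Msᵀ)⁻¹ + 1 - As * (Msᵀ)⁻¹ := by
        rw [Matrix.sub_mul, Matrix.add_mul, Matrix.mul_nonsing_inv _ hMsT]
      rw [Matrix.mul_assoc, this, Matrix.mul_sub, Matrix.mul_add, Matrix.mul_one,
        ← Matrix.mul_assoc, Matrix.nonsing_inv_mul _ hMs, Matrix.one_mul,
        ← Matrix.mul_assoc]
    have hWU : (1 - S * Ms⁻¹ * Sᵀ * A) * (1 - S * (Msᵀ)⁻¹ * Sᵀ * A) = 1 - Xh := by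
      rw [hXhdef]
      show _ = 1 - S * tM⁻¹ * Sᵀ * A
      rw [htMinv]
      have hJJ : (S * Ms⁻¹ * Sᵀ * A) * (S * (Msᵀ)⁻¹ * Sᵀ * A)
          = S * (Ms⁻¹ * As * (Msᵀ)⁻¹) * Sᵀ * A := by
        rw [hAs]; simp only [Matrix.mul_assoc]
      rw [Matrix.mul_sub, Matrix.mul_one, Matrix.sub_mul, Matrix.one_mul, hJJ]
      rw [Matrix.mul_sub, Matrix.mul_add, Matrix.sub_mul, Matrix.add_mul,
        Matrix.sub_mul, Matrix.add_mul]
      abel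
    have h1Z : (1 - Xh) * (1 - Pi) = 1 - Z := by
      rw [hZdef, Matrix.sub_mul, Matrix.one_mul, Matrix.mul_sub, Matrix.mul_one]
      abel
    show ((1 - S * (Msᵀ)⁻¹ * Sᵀ * A) * (1 - Pi) * (1 - S * Ms⁻¹ * Sᵀ * A)).charpoly = _
    rw [Matrix.mul_assoc (1 - S * (Msᵀ)⁻¹ * Sᵀ * A), charpolyComm,
      Matrix.mul_assoc (1 - Pi), hWU, charpolyComm, h1Z]
  -- ## the rectangular identity
  have hFG : (fromCols P S) * (fromRows (Ac⁻¹ * (Pᵀ * A)) (tM⁻¹ * (Sᵀ * (A * (1 - Pi))))) = Z := by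
    rw [Matrix.fromCols_mul_fromRows, hZdef, hPidef, hXhdef]
    show P * (Ac⁻¹ * (Pᵀ * A)) + S * (tM⁻¹ * (Sᵀ * (A * (1 - Pi)))) =
      P * Ac⁻¹ * Pᵀ * A + S * tM⁻¹ * Sᵀ * A * (1 - proj A P)
    rw [← hPidef]
    simp only [Matrix.mul_assoc]
  have hGF : (fromRows (Ac⁻¹ * (Pᵀ * A)) (tM⁻¹ * (Sᵀ * (A * (1 - Pi))))) * (fromCols P S) =
      fromBlocks 1 (Ac⁻¹ * (Pᵀ * A) * S) 0 Y := by
    have h21 : tM⁻¹ * (Sᵀ * (A * (1 - Pi))) * P = 0 := by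
      have e : Sᵀ * (A * ((1 - Pi) * P)) = 0 := by rw [hEP]; simp
      calc tM⁻¹ * (Sᵀ * (A * (1 - Pi))) * P = tM⁻¹ * (Sᵀ * (A * ((1 - Pi) * P))) := by
            simp only [Matrix.mul_assoc]
        _ = 0 := by rw [e]; simp
    have h22 : tM⁻¹ * (Sᵀ * (A * (1 - Pi))) * S = Y := by
      rw [hYdef]; simp only [Matrix.mul_assoc]
    rw [Matrix.fromRows_mul_fromCols, hG1P, h21, h22]
  -- ## rank facts
  have hPiRank : Pi.rank = nc := by
    apply le_antisymm
    · calc Pi.rank ≤ P.rank := by rw [hPieq]; exact Matrix.rank_mul_le_left _ _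
        _ = nc := hP
    · calc nc = P.rank := hP.symm
        _ = (Pi * P).rank := by rw [hPiP]
        _ ≤ Pi.rank := Matrix.rank_mul_le_left _ _
  have hERank : (1 - Pi).rank = n - nc := by
    rw [rankOneSub Pi hPi2, hPiRank]; simp
  have hTRank : ((1 - Pi) * S).rank = n - nc := by
    have h1 : (1 - Pi) * (fromCols S P) =
        fromCols ((1 - Pi) * S) (0 : Matrix (Fin n) (Fin nc) ℝ) := by
      rw [Matrix.mul_fromCols, hEP]
    have h2 := rankSurjMul (1 - Pi) (fromCols S P) (by rw [hSP]; simp)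
    rw [h1, rankFromColumnsZero] at h2
    rw [h2, hERank]
  -- ## K is PSD of rank n - nc
  set K : Matrix (Fin ns) (Fin ns) ℝ := Sᵀ * A * (1 - Pi) * S with hKdef
  have hKT : K = ((1 - Pi) * S)ᵀ * A * ((1 - Pi) * S) := by
    rw [hKdef, Matrix.transpose_mul]
    calc Sᵀ * A * (1 - Pi) * S = Sᵀ * ((1 - Pi)ᵀ * A * (1 - Pi)) * S := by
          rw [hAE]; simp only [Matrix.mul_assoc]
      _ = Sᵀ * (1 - Pi)ᵀ * A * ((1 - Pi) * S) := by simp only [Matrix.mul_assoc]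
  have hKpsd : K.PosSemidef := by
    rw [hKT]
    have := hA.posSemidef.conjTranspose_mul_mul_same ((1 - Pi) * S)
    rwa [Matrix.conjTranspose_eq_transpose_of_trivial] at this
  have hKrank : K.rank = n - nc := by
    set T := (1 - Pi) * S with hT
    open scoped MatrixOrder in set RA := CFC.sqrt A with hRA
    have hRAmul : RA * RA = A := open scoped MatrixOrder in CFC.sqrt_mul_sqrt_self A hA.posSemidef.nonneg
    have hRAH : RAᵀ = RA := by
      rw [← Matrix.conjTranspose_eq_transpose_of_trivial]
      exact (open scoped MatrixOrder in Matrix.nonneg_iff_posSemidef.mp (CFC.sqrt_nonneg A)).1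
    have hRAU : IsUnit RA.det := by
      have h0 : RA.det * RA.det = A.det := by rw [← Matrix.det_mul, hRAmul]
      have hAd : A.det ≠ 0 := hA.det_pos.ne'
      have : RA.det ≠ 0 := fun h => hAd (by rw [← h0, h, zero_mul])
      exact this.isUnit
    have e1 : K = (RA * T)ᵀ * (RA * T) := by
      rw [Matrix.transpose_mul, hRAH, hKT, ← hRAmul]
      simp only [Matrix.mul_assoc]
    rw [e1, Matrix.rank_transpose_mul_self,
      Matrix.rank_mul_eq_right_of_isUnit_det RA T hRAU, hTRank]
  -- ## Y is similar to the PSD matrix Yh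
  have htMinvPD : (tM⁻¹).PosDef := htMPD.inv
  open scoped MatrixOrder in set R := CFC.sqrt tM⁻¹ with hR
  have hRmul : R * R = tM⁻¹ := open scoped MatrixOrder in CFC.sqrt_mul_sqrt_self tM⁻¹ htMinvPD.posSemidef.nonneg
  have hRH : Rᵀ = R := by
    rw [← Matrix.conjTranspose_eq_transpose_of_trivial]
    exact (open scoped MatrixOrder in Matrix.nonneg_iff_posSemidef.mp (CFC.sqrt_nonneg tM⁻¹)).1
  have hRU : IsUnit R.det := by
    have h0 : R.det * R.det = (tM⁻¹).det := by rw [← Matrix.det_mul, hRmul]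
    have h1 : (tM⁻¹).det ≠ 0 := (htMinvPD.det_pos).ne'
    have : R.det ≠ 0 := fun h => h1 (by rw [← h0, h, zero_mul])
    exact this.isUnit
  set Yh : Matrix (Fin ns) (Fin ns) ℝ := R * K * R with hYh
  have hYhpsd : Yh.PosSemidef := by
    rw [hYh]
    have := hKpsd.conjTranspose_mul_mul_same R
    rwa [Matrix.conjTranspose_eq_transpose_of_trivial, hRH] at this
  have hYhrank : Yh.rank = n - nc := by
    rw [hYh, Matrix.rank_mul_eq_left_of_isUnit_det R (R * K) hRU,
      Matrix.rank_mul_eq_right_of_isUnit_det R K hRU, hKrank]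
  have hcpY : Y.charpoly = Yh.charpoly := by
    have e : Y = R * (R * K) := by
      rw [hYdef, ← hRmul]; simp only [Matrix.mul_assoc]
    rw [e, charpolyComm, hYh, Matrix.mul_assoc]
  obtain ⟨hYroots0, hYcard0⟩ := psdRoots Yh hYhpsd
  rw [hYhrank] at hYroots0 hYcard0
  have hYroots' : Y.charpoly.roots = Multiset.replicate (ns - (n - nc)) 0 +
      (Y.charpoly.roots.filter (fun x => 0 < x)) := by rw [hcpY]; exact hYroots0
  have hYcard' : (Y.charpoly.roots.filter (fun x => 0 < x)).card = n - nc := by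
    rw [hcpY]; exact hYcard0
  -- ## rectangular identity
  have hrect := charpolyRect (fromCols P S)
    (fromRows (Ac⁻¹ * (Pᵀ * A)) (tM⁻¹ * (Sᵀ * (A * (1 - Pi)))))
  rw [hFG, hGF, Matrix.charpoly_fromBlocks_zero₂₁, charpolyOne] at hrect
  have hcardsum : Fintype.card (Fin nc ⊕ Fin ns) = nc + ns := by simp
  have hcardn : Fintype.card (Fin n) = n := by simp
  rw [hcardsum, hcardn] at hrect
  -- take roots on both sides
  have hZne : Z.charpoly ≠ 0 := (Matrix.charpoly_monic Z).ne_zero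
  have hYne : Y.charpoly ≠ 0 := (Matrix.charpoly_monic Y).ne_zero
  have hrootsL : ((X : ℝ[X]) ^ (nc + ns) * Z.charpoly).roots =
      Multiset.replicate (nc + ns) 0 + Z.charpoly.roots := by
    rw [Polynomial.roots_mul (mul_ne_zero (pow_ne_zero _ Polynomial.X_ne_zero) hZne),
      Polynomial.roots_pow, Polynomial.roots_X, Multiset.nsmul_singleton]
  have hrootsR : ((X : ℝ[X]) ^ n * (((X : ℝ[X]) - C 1) ^ nc * Y.charpoly)).roots =
      Multiset.replicate n 0 + (Multiset.replicate nc 1 + Y.charpoly.roots) := by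
    rw [Polynomial.roots_mul (mul_ne_zero (pow_ne_zero _ Polynomial.X_ne_zero)
        (mul_ne_zero (pow_ne_zero _ (Polynomial.X_sub_C_ne_zero 1)) hYne)),
      Polynomial.roots_mul (mul_ne_zero (pow_ne_zero _ (Polynomial.X_sub_C_ne_zero 1)) hYne),
      Polynomial.roots_pow, Polynomial.roots_X, Multiset.nsmul_singleton,
      Polynomial.roots_pow, Polynomial.roots_X_sub_C, Multiset.nsmul_singleton]
  have hkey : Multiset.replicate (nc + ns) (0:ℝ) + Z.charpoly.roots =
      Multiset.replicate n 0 + (Multiset.replicate nc 1 + Y.charpoly.roots) := by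
    rw [← hrootsL, ← hrootsR, hrect]
  rw [hYroots'] at hkey
  have hZroots : Z.charpoly.roots =
      Multiset.replicate nc 1 + (Y.charpoly.roots.filter (fun x => 0 < x)) := by
    have hnum : n + (ns - (n - nc)) = nc + ns := by omega
    have hkey2 : Multiset.replicate (nc + ns) (0:ℝ) + Z.charpoly.roots =
        Multiset.replicate (nc + ns) (0:ℝ) +
          (Multiset.replicate nc 1 + (Y.charpoly.roots.filter (fun x => 0 < x))) := by
      rw [hkey, ← hnum, Multiset.replicate_add]
      abel
    exact add_left_cancel hkey2
  have hZcard : Z.charpoly.roots.card = n := by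
    rw [hZroots, Multiset.card_add, Multiset.card_replicate, hYcard']; omega
  have hEroots := rootsOneSub Z hZcard
  rw [hcpE, hEroots, hZroots, Multiset.map_add, Multiset.map_replicate]
  norm_num
end

section
/- Let (μ_i, v_i), i = 1,…,n, be eigenpairs of S M̃_s^{-1} S^T A with μ_1 ≤ μ_2 ≤ ⋯ ≤ μ_n and the eigenvectors A-orthonormal (v_i^T A v_j = δ_{ij}). Then the convergence factor of the exact TLHB method satisfies the lower bound ‖E_TL‖_A ≥ 1 − μ_{n_c+1}. -/
open Matrix

private lemma dot_trans {n : ℕ} (M : Matrix (Fin n) (Fin n) ℝ) (x w : Fin n → ℝ) :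
    (M *ᵥ x) ⬝ᵥ w = x ⬝ᵥ (Mᵀ *ᵥ w) := by
  rw [dotProduct_mulVec, vecMul_transpose, dotProduct_comm]

private lemma psd_nonneg {n : ℕ} {A : Matrix (Fin n) (Fin n) ℝ} (hA : A.PosSemidef)
    (x : Fin n → ℝ) : 0 ≤ x ⬝ᵥ (A *ᵥ x) := by
  simpa using hA.dotProduct_mulVec_nonneg x

private lemma ip_symm {n : ℕ} {A : Matrix (Fin n) (Fin n) ℝ} (hAT : Aᵀ = A)
    (x y : Fin n → ℝ) : x ⬝ᵥ (A *ᵥ y) = y ⬝ᵥ (A *ᵥ x) := by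
  rw [← hAT, ← dot_trans, dotProduct_comm, hAT]

private lemma cs_ip {n : ℕ} {A : Matrix (Fin n) (Fin n) ℝ} (hA : A.PosSemidef)
    (x y : Fin n → ℝ) :
    x ⬝ᵥ (A *ᵥ y) ≤ Real.sqrt (x ⬝ᵥ (A *ᵥ x)) * Real.sqrt (y ⬝ᵥ (A *ᵥ y)) := by
  have hAT : Aᵀ = A := by
    rw [← Matrix.conjTranspose_eq_transpose_of_trivial]; exact hA.1
  have hquad : ∀ t : ℝ, 0 ≤ (y ⬝ᵥ (A *ᵥ y)) * (t * t) + (2 * (x ⬝ᵥ (A *ᵥ y))) * t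
      + x ⬝ᵥ (A *ᵥ x) := by
    intro t
    have h0 := psd_nonneg hA (x + t • y)
    have hexp : (x + t • y) ⬝ᵥ (A *ᵥ (x + t • y)) =
        (y ⬝ᵥ (A *ᵥ y)) * (t * t) + (2 * (x ⬝ᵥ (A *ᵥ y))) * t + x ⬝ᵥ (A *ᵥ x) := by
      rw [mulVec_add, mulVec_smul, dotProduct_add, add_dotProduct, add_dotProduct,
        dotProduct_smul, dotProduct_smul, smul_dotProduct, smul_dotProduct,
        ip_symm hAT y x]
      simp only [smul_eq_mul]
      ring
    linarith [hexp ▸ h0]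
  have hd := discrim_le_zero hquad
  rw [discrim] at hd
  have h2 : (x ⬝ᵥ (A *ᵥ y)) ^ 2 ≤ (x ⬝ᵥ (A *ᵥ x)) * (y ⬝ᵥ (A *ᵥ y)) := by nlinarith
  calc x ⬝ᵥ (A *ᵥ y) ≤ |x ⬝ᵥ (A *ᵥ y)| := le_abs_self _
    _ = Real.sqrt ((x ⬝ᵥ (A *ᵥ y)) ^ 2) := (Real.sqrt_sq_eq_abs _).symm
    _ ≤ Real.sqrt ((x ⬝ᵥ (A *ᵥ x)) * (y ⬝ᵥ (A *ᵥ y))) := Real.sqrt_le_sqrt h2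
    _ = _ := Real.sqrt_mul (psd_nonneg hA x) _

private lemma frob_bound {n : ℕ} (M : Matrix (Fin n) (Fin n) ℝ) (x : Fin n → ℝ) :
    (M *ᵥ x) ⬝ᵥ (M *ᵥ x) ≤ (∑ i, ∑ j, (M i j) ^ 2) * (x ⬝ᵥ x) := by
  have hx : x ⬝ᵥ x = ∑ j, (x j) ^ 2 := by simp [dotProduct, sq]
  have hl : (M *ᵥ x) ⬝ᵥ (M *ᵥ x) = ∑ i, (∑ j, M i j * x j) ^ 2 := by
    simp [dotProduct, mulVec, sq]
  rw [hl, hx, Finset.sum_mul]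
  exact Finset.sum_le_sum fun i _ => Finset.sum_mul_sq_le_sq_mul_sq _ _ _

private lemma aNorm_bddAbove {n : ℕ} {A : Matrix (Fin n) (Fin n) ℝ} (hA : A.PosDef)
    (E : Matrix (Fin n) (Fin n) ℝ) :
    BddAbove {r : ℝ | ∃ v : Fin n → ℝ, v ≠ 0 ∧ r = eNorm A (E.mulVec v) / eNorm A v} := by
  open scoped MatrixOrder in obtain ⟨R, hRsym, hRR⟩ : ∃ R : Matrix (Fin n) (Fin n) ℝ, Rᵀ = R ∧ R * R = A :=
    ⟨CFC.sqrt A, by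
      rw [← Matrix.conjTranspose_eq_transpose_of_trivial]
      exact (CFC.sqrt_nonneg A).posSemidef.1, CFC.sqrt_mul_sqrt_self A hA.posSemidef.nonneg⟩
  have hRdet : IsUnit R.det := by
    refine isUnit_iff_ne_zero.mpr fun h => ?_
    have : R.det * R.det = A.det := by rw [← det_mul, hRR]
    rw [h, mul_zero] at this
    exact absurd this.symm hA.det_pos.ne'
  have hsplit : ∀ x : Fin n → ℝ, x ⬝ᵥ (A *ᵥ x) = (R *ᵥ x) ⬝ᵥ (R *ᵥ x) := by
    intro x
    have h := dot_trans R x (R *ᵥ x)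
    rw [hRsym, mulVec_mulVec, hRR] at h
    exact h.symm
  set N := R * E * R⁻¹ with hN
  have hNE : ∀ x : Fin n → ℝ, R *ᵥ (E *ᵥ x) = N *ᵥ (R *ᵥ x) := by
    intro x
    rw [mulVec_mulVec, mulVec_mulVec, hN, Matrix.mul_assoc,
      Matrix.nonsing_inv_mul _ hRdet, Matrix.mul_one]
  refine ⟨Real.sqrt (∑ i, ∑ j, (N i j) ^ 2), ?_⟩
  rintro r ⟨x, hx, rfl⟩
  have hxpos : 0 < eNorm A x := Real.sqrt_pos.mpr (by simpa using hA.dotProduct_mulVec_pos hx)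
  rw [div_le_iff₀ hxpos]
  unfold eNorm
  have h1 : (E *ᵥ x) ⬝ᵥ (A *ᵥ (E *ᵥ x)) ≤ (∑ i, ∑ j, (N i j) ^ 2) * (x ⬝ᵥ (A *ᵥ x)) := by
    rw [hsplit, hsplit, hNE]
    exact frob_bound N (R *ᵥ x)
  calc Real.sqrt ((E.mulVec x) ⬝ᵥ A.mulVec (E.mulVec x))
      ≤ Real.sqrt ((∑ i, ∑ j, (N i j) ^ 2) * (x ⬝ᵥ A.mulVec x)) := Real.sqrt_le_sqrt h1
    _ = Real.sqrt (∑ i, ∑ j, (N i j) ^ 2) * Real.sqrt (x ⬝ᵥ A.mulVec x) :=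
        Real.sqrt_mul (Finset.sum_nonneg fun i _ => Finset.sum_nonneg fun j _ => sq_nonneg _) _

private lemma sum_dot {n k : ℕ} (f g : Fin k → Fin n → ℝ) :
    (∑ i, f i) ⬝ᵥ (∑ j, g j) = ∑ i, ∑ j, (f i ⬝ᵥ g j) := by
  simp only [dotProduct, Finset.sum_apply, Finset.sum_mul_sum]
  rw [Finset.sum_comm]
  exact Finset.sum_congr rfl fun i _ => Finset.sum_comm

private lemma mulVec_lin_sum {n k : ℕ} (M : Matrix (Fin n) (Fin n) ℝ)
    (a : Fin k → ℝ) (f : Fin k → Fin n → ℝ) :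
    M *ᵥ (∑ i, a i • f i) = ∑ i, a i • (M *ᵥ f i) := by
  rw [← M.mulVecLin_apply, map_sum]
  simp [Matrix.mulVecLin_apply, mulVec_smul]

/-- Optimal interpolation lower bound: if `(μ_i, v_i)` are `A`-orthonormal eigenpairs of
`S M̃_s⁻¹ Sᵀ A` with `μ_1 ≤ ⋯ ≤ μ_n`, then `‖E_TL‖_A ≥ 1 - μ_{n_c+1}`. -/
theorem optimal_interpolation_lower_bound {n ns nc : ℕ}
    (A : Matrix (Fin n) (Fin n) ℝ) (hA : A.PosDef)
    (S : Matrix (Fin n) (Fin ns) ℝ) (hS : S.rank = ns)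
    (P : Matrix (Fin n) (Fin nc) ℝ) (hP : P.rank = nc)
    (hns : ns < n) (hnc : nc < n) (hsum : n ≤ ns + nc)
    (hSP : (fromCols S P).rank = n)
    (Ms : Matrix (Fin ns) (Fin ns) ℝ) (hMs : IsUnit Ms.det)
    (hMsA : (Ms + Msᵀ - Sᵀ * A * S).PosDef)
    (μ : Fin n → ℝ) (v : Fin n → Fin n → ℝ)
    (hmono : Monotone μ)
    (heig : ∀ i, (smoothX A S Ms).mulVec (v i) = μ i • v i)
    (horth : ∀ i j, v i ⬝ᵥ A.mulVec (v j) = if i = j then 1 else 0) :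
    1 - μ ⟨nc, hnc⟩ ≤ aNorm A (Etl A S P Ms) := by
  classical
  unfold aNorm
  have hbdd := aNorm_bddAbove hA (Etl A S P Ms)
  -- trivial case
  rcases le_or_gt (1 - μ ⟨nc, hnc⟩) 0 with hcase | hcase
  · have hv0 : v ⟨0, Nat.pos_of_ne_zero (by omega)⟩ ≠ 0 := by
      intro h
      have h1 := horth ⟨0, Nat.pos_of_ne_zero (by omega)⟩ ⟨0, Nat.pos_of_ne_zero (by omega)⟩
      rw [h] at h1
      simp at h1
    refine le_trans hcase (le_trans ?_ (le_csSup hbdd ⟨_, hv0, rfl⟩))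
    exact div_nonneg (Real.sqrt_nonneg _) (Real.sqrt_nonneg _)
  -- main case
  have hAT : Aᵀ = A := by
    rw [← Matrix.conjTranspose_eq_transpose_of_trivial]; exact hA.1
  have hMsT : IsUnit (Msᵀ).det := by rwa [det_transpose]
  have hWU : IsUnit (Ms + Msᵀ - Sᵀ * A * S).det := hMsA.det_pos.ne'.isUnit
  set B : Matrix (Fin n) (Fin n) ℝ := 1 - S * (Msᵀ)⁻¹ * Sᵀ * A with hBdef
  set D : Matrix (Fin n) (Fin n) ℝ := 1 - S * Ms⁻¹ * Sᵀ * A with hDdef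
  set X : Matrix (Fin n) (Fin n) ℝ := smoothX A S Ms with hXdef
  -- identity D * B = 1 - X
  have hDB : D * B = 1 - X := by
    have htinv : (tMs Ms (Sᵀ * A * S))⁻¹
        = Ms⁻¹ + (Msᵀ)⁻¹ - Ms⁻¹ * (Sᵀ * A * S) * (Msᵀ)⁻¹ := by
      unfold tMs
      rw [Matrix.mul_inv_rev, Matrix.mul_inv_rev, Matrix.nonsing_inv_nonsing_inv _ hWU,
        Matrix.sub_mul, Matrix.add_mul, Matrix.mul_nonsing_inv _ hMsT,
        Matrix.mul_sub, Matrix.mul_add, ← Matrix.mul_assoc Ms⁻¹ Ms,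
        Matrix.nonsing_inv_mul _ hMs, Matrix.one_mul, Matrix.mul_one,
        ← Matrix.mul_assoc]
      abel
    rw [hDdef, hBdef, hXdef]
    unfold smoothX
    rw [htinv]
    simp only [Matrix.mul_add, Matrix.add_mul, Matrix.mul_sub, Matrix.sub_mul,
      Matrix.mul_one, Matrix.one_mul, Matrix.mul_assoc]
    abel
  -- identity Bᵀ * A = A * D
  have hBtA : Bᵀ * A = A * D := by
    rw [hBdef, hDdef, Matrix.transpose_sub, Matrix.transpose_one]
    simp only [Matrix.transpose_mul, transpose_transpose, hAT,
      ← Matrix.transpose_nonsing_inv]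
    simp only [Matrix.mul_add, Matrix.add_mul, Matrix.mul_sub, Matrix.sub_mul,
      Matrix.mul_one, Matrix.one_mul, Matrix.mul_assoc]
  have hBAB : Bᵀ * A * B = A * (1 - X) := by
    rw [hBtA, Matrix.mul_assoc, hDB]
  clear_value B D X
  -- quadratic form transfer
  have hF1 : ∀ x y : Fin n → ℝ,
      (B *ᵥ x) ⬝ᵥ (A *ᵥ (B *ᵥ y)) = x ⬝ᵥ (A *ᵥ ((1 - X) *ᵥ y)) := by
    intro x y
    rw [dot_trans B x, mulVec_mulVec, mulVec_mulVec, hBAB, ← mulVec_mulVec]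
  -- eigenvector index embedding
  have hle : nc + 1 ≤ n := hnc
  set e : Fin (nc + 1) → Fin n := fun i => ⟨i.1, lt_of_lt_of_le i.isLt hle⟩ with hedef
  have heinj : Function.Injective e := by
    intro i j h
    have h2 := congrArg Fin.val h
    simp only [hedef] at h2
    exact Fin.ext h2
  -- action of 1 - X on spans
  have hXv : ∀ a : Fin (nc + 1) → ℝ,
      (1 - X) *ᵥ (∑ i, a i • v (e i)) = ∑ i, (a i * (1 - μ (e i))) • v (e i) := by
    intro a
    rw [Matrix.sub_mulVec, Matrix.one_mulVec, mulVec_lin_sum]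
    have : ∀ i : Fin (nc + 1), a i • (X *ᵥ v (e i)) = (a i * μ (e i)) • v (e i) := by
      intro i
      rw [heig (e i), smul_smul]
    rw [Finset.sum_congr rfl fun i _ => this i, ← Finset.sum_sub_distrib]
    refine Finset.sum_congr rfl fun i _ => ?_
    rw [← sub_smul]
    congr 1
    ring
  -- orthonormal expansion of the A-inner product
  have hdot : ∀ a b : Fin (nc + 1) → ℝ,
      (∑ i, a i • v (e i)) ⬝ᵥ (A *ᵥ (∑ j, b j • v (e j))) = ∑ i, a i * b i := by
    intro a b
    rw [mulVec_lin_sum, sum_dot]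
    have hterm : ∀ i j : Fin (nc + 1),
        (a i • v (e i)) ⬝ᵥ (b j • (A *ᵥ v (e j))) = if i = j then a i * b i else 0 := by
      intro i j
      rw [dotProduct_smul, smul_dotProduct]
      have := horth (e i) (e j)
      rw [show (v (e i) ⬝ᵥ A.mulVec (v (e j))) = (if e i = e j then (1:ℝ) else 0) from this]
      by_cases h : i = j
      · subst h; simp [mul_comm]
      · have : e i ≠ e j := fun hh => h (heinj hh)
        simp [h, this]
    rw [Finset.sum_congr rfl fun i _ => Finset.sum_congr rfl fun j _ => hterm i j]
    simp
  -- kernel vector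
  set Vm : Matrix (Fin n) (Fin (nc + 1)) ℝ := Matrix.of fun r i => v (e i) r with hVm
  have hVmul : ∀ cc : Fin (nc + 1) → ℝ, Vm *ᵥ cc = ∑ i, cc i • v (e i) := by
    intro cc
    funext r
    simp [hVm, Matrix.mulVec, dotProduct, Finset.sum_apply, mul_comm]
  set G : Matrix (Fin nc) (Fin (nc + 1)) ℝ := Pᵀ * (A * ((1 - X) * Vm)) with hG
  obtain ⟨c, hc0, hGc⟩ : ∃ cc : Fin (nc + 1) → ℝ, cc ≠ 0 ∧ G *ᵥ cc = 0 := by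
    by_contra h
    push_neg at h
    have hinj : Function.Injective G.mulVecLin := by
      rw [← LinearMap.ker_eq_bot]
      refine (Submodule.eq_bot_iff _).mpr fun x hx => ?_
      by_contra hx0
      exact (h x hx0) hx
    have hle2 := LinearMap.finrank_le_finrank_of_injective hinj
    rw [Module.finrank_pi, Module.finrank_pi, Fintype.card_fin, Fintype.card_fin] at hle2
    omega
  set u : Fin n → ℝ := ∑ i, c i • v (e i) with hu
  set z : Fin n → ℝ := (1 - X) *ᵥ u with hzdef
  have hz : z = ∑ i, (c i * (1 - μ (e i))) • v (e i) := by rw [hzdef, hu]; exact hXv c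
  set w : Fin n → ℝ := B *ᵥ u with hw
  clear_value z w
  -- P-orthogonality of z
  have hPz : Pᵀ *ᵥ (A *ᵥ z) = 0 := by
    have : G *ᵥ c = Pᵀ *ᵥ (A *ᵥ ((1 - X) *ᵥ (Vm *ᵥ c))) := by
      rw [hG, ← mulVec_mulVec, ← mulVec_mulVec, ← mulVec_mulVec]
    rw [this, hVmul, ← hu, ← hzdef] at hGc
    exact hGc
  have hproj : proj A P *ᵥ z = 0 := by
    unfold proj
    rw [← mulVec_mulVec, ← mulVec_mulVec, ← mulVec_mulVec, hPz, mulVec_zero, mulVec_zero]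
  -- E applied to w
  have hEw : Etl A S P Ms *ᵥ w = B *ᵥ z := by
    have hE : Etl A S P Ms = B * (1 - proj A P) * D := by
      rw [hBdef, hDdef]; rfl
    have h1 : D *ᵥ (B *ᵥ u) = z := by rw [mulVec_mulVec, hDB, ← hzdef]
    have h2 : (1 - proj A P) *ᵥ z = z := by
      rw [Matrix.sub_mulVec, Matrix.one_mulVec, hproj, sub_zero]
    rw [hE, hw, ← mulVec_mulVec, ← mulVec_mulVec, h1, h2]
  -- inner products
  have hqle : ∀ i : Fin (nc + 1), 1 - μ ⟨nc, hnc⟩ ≤ 1 - μ (e i) := by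
    intro i
    have : e i ≤ ⟨nc, hnc⟩ := by
      simp only [Fin.le_def, hedef]
      omega
    linarith [hmono this]
  have hww : w ⬝ᵥ (A *ᵥ w) = ∑ i, c i * (c i * (1 - μ (e i))) := by
    rw [hw, hF1 u u, ← hzdef, hu, hz, hdot]
  have hwEw : w ⬝ᵥ (A *ᵥ (Etl A S P Ms *ᵥ w)) =
      ∑ i, c i * (c i * (1 - μ (e i)) * (1 - μ (e i))) := by
    rw [hEw, hw, hF1 u z]
    have h2 : (1 - X) *ᵥ z = ∑ i, (c i * (1 - μ (e i)) * (1 - μ (e i))) • v (e i) := by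
      rw [hz, hXv]
    rw [h2, hu, hdot]
  have hterm_pos : ∀ i : Fin (nc + 1), 0 ≤ c i * (c i * (1 - μ (e i))) := by
    intro i
    have := hqle i
    nlinarith [sq_nonneg (c i)]
  obtain ⟨i0, hi0⟩ := Function.ne_iff.mp hc0
  simp only [Pi.zero_apply] at hi0
  have hpos_ip : 0 < ∑ i, c i * (c i * (1 - μ (e i))) := by
    refine Finset.sum_pos' (fun i _ => hterm_pos i) ⟨i0, Finset.mem_univ _, ?_⟩
    have h1 : 0 < c i0 * c i0 := mul_self_pos.mpr hi0
    have h2 := hqle i0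
    nlinarith
  have hkey : (1 - μ ⟨nc, hnc⟩) * (w ⬝ᵥ (A *ᵥ w)) ≤ w ⬝ᵥ (A *ᵥ (Etl A S P Ms *ᵥ w)) := by
    rw [hww, hwEw, Finset.mul_sum]
    refine Finset.sum_le_sum fun i _ => ?_
    have h1 := hqle i
    have h2 := hterm_pos i
    nlinarith
  have hCS := cs_ip hA.posSemidef w (Etl A S P Ms *ᵥ w)
  have hwne : w ≠ 0 := by
    intro h
    rw [h, zero_dotProduct] at hww
    rw [← hww] at hpos_ip
    exact lt_irrefl _ hpos_ip

  have hip_pos : 0 < w ⬝ᵥ (A *ᵥ w) := by rw [hww]; exact hpos_ip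
  have hewpos : 0 < eNorm A w := Real.sqrt_pos.mpr hip_pos
  have hsq : eNorm A w * eNorm A w = w ⬝ᵥ (A *ᵥ w) :=
    Real.mul_self_sqrt (le_of_lt hip_pos)
  have hratio : 1 - μ ⟨nc, hnc⟩ ≤ eNorm A (Etl A S P Ms *ᵥ w) / eNorm A w := by
    rw [le_div_iff₀ hewpos]
    have h3 : (1 - μ ⟨nc, hnc⟩) * (eNorm A w * eNorm A w)
        ≤ eNorm A w * eNorm A (Etl A S P Ms *ᵥ w) := by
      rw [hsq]
      exact le_trans hkey hCS
    nlinarith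
  refine le_trans hratio (le_csSup hbdd ⟨w, hwne, rfl⟩)
end

section
/- Let (μ_i, v_i), i = 1,…,n, be eigenpairs of S M̃_s^{-1} S^T A with μ_1 ≤ μ_2 ≤ ⋯ ≤ μ_n and the eigenvectors A-orthonormal (v_i^T A v_j = δ_{ij}). If the column space of P equals span{v_1, …, v_{n_c}}, then the lower bound is attained: ‖E_TL‖_A = 1 − μ_{n_c+1}. -/
open Matrix

section AuxLemmas

open Matrix

/-- `⟨Bx, A (By)⟩ = ⟨x, (Bᵀ A B) y⟩`. -/
lemma aux_dp_conj {n m : ℕ} (A : Matrix (Fin n) (Fin n) ℝ) (B : Matrix (Fin n) (Fin m) ℝ)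
    (x y : Fin m → ℝ) :
    (B.mulVec x) ⬝ᵥ A.mulVec (B.mulVec y) = x ⬝ᵥ (Bᵀ * A * B).mulVec y := by
  rw [mulVec_mulVec, dotProduct_mulVec, ← vecMul_transpose, vecMul_vecMul,
    ← dotProduct_mulVec]
  simp [Matrix.mul_assoc]

/-- Full column rank gives an injective `mulVec`. -/
lemma aux_mulVec_inj {n m : ℕ} (P : Matrix (Fin n) (Fin m) ℝ) (hP : P.rank = m)
    {x : Fin m → ℝ} (hx : x ≠ 0) : P.mulVec x ≠ 0 := by
  have h2 := LinearMap.finrank_range_add_finrank_ker P.mulVecLin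
  rw [Matrix.rank] at hP
  rw [hP] at h2
  simp only [Module.finrank_fin_fun] at h2
  have hker : Module.finrank ℝ (LinearMap.ker P.mulVecLin) = 0 := by omega
  have hbot : LinearMap.ker P.mulVecLin = ⊥ := Submodule.finrank_eq_zero.mp hker
  have hinj : Function.Injective P.mulVecLin := LinearMap.ker_eq_bot.mp hbot
  intro h0
  apply hx
  apply hinj
  simpa [Matrix.mulVecLin_apply] using h0

lemma aux_q_symm {n : ℕ} (A : Matrix (Fin n) (Fin n) ℝ) (hA : Aᵀ = A) (x y : Fin n → ℝ) :
    x ⬝ᵥ A.mulVec y = y ⬝ᵥ A.mulVec x := by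
  rw [dotProduct_mulVec, ← vecMul_transpose, hA, dotProduct_comm]

lemma aux_q_pos {n : ℕ} (A : Matrix (Fin n) (Fin n) ℝ) (hA : A.PosDef) {x : Fin n → ℝ}
    (hx : x ≠ 0) : 0 < x ⬝ᵥ A.mulVec x := by
  simpa using hA.dotProduct_mulVec_pos hx

lemma aux_q_nonneg {n : ℕ} (A : Matrix (Fin n) (Fin n) ℝ) (hA : A.PosDef) (x : Fin n → ℝ) :
    0 ≤ x ⬝ᵥ A.mulVec x := by
  simpa using hA.posSemidef.dotProduct_mulVec_nonneg x

/-- Cauchy–Schwarz inequality for the `A`-inner product. -/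
lemma aux_cs {n : ℕ} (A : Matrix (Fin n) (Fin n) ℝ) (hA : A.PosDef) (x y : Fin n → ℝ) :
    x ⬝ᵥ A.mulVec y ≤ Real.sqrt (x ⬝ᵥ A.mulVec x) * Real.sqrt (y ⬝ᵥ A.mulVec y) := by
  have hT : Aᵀ = A := by
    have := hA.1
    simpa [Matrix.IsHermitian] using this
  by_cases hy : y = 0
  · simp [hy]
  · set a : ℝ := y ⬝ᵥ A.mulVec y with ha
    set b : ℝ := x ⬝ᵥ A.mulVec y with hb
    have hapos : 0 < a := aux_q_pos A hA hy
    have key : 0 ≤ (a • x - b • y) ⬝ᵥ A.mulVec (a • x - b • y) :=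
      aux_q_nonneg A hA _
    have expand : (a • x - b • y) ⬝ᵥ A.mulVec (a • x - b • y)
        = a * (a * (x ⬝ᵥ A.mulVec x) - b * b) := by
      rw [mulVec_sub, mulVec_smul, mulVec_smul, sub_dotProduct, smul_dotProduct,
        smul_dotProduct, dotProduct_sub, dotProduct_sub, dotProduct_smul, dotProduct_smul,
        dotProduct_smul, dotProduct_smul]
      have : y ⬝ᵥ A.mulVec x = b := aux_q_symm A hT y x
      rw [this, ← ha, ← hb]
      ring_nf
    rw [expand] at key
    have h2 : b * b ≤ (x ⬝ᵥ A.mulVec x) * a := by nlinarith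
    calc b ≤ Real.sqrt (b * b) := by
            rw [Real.sqrt_mul_self_eq_abs]; exact le_abs_self b
      _ ≤ Real.sqrt ((x ⬝ᵥ A.mulVec x) * a) := Real.sqrt_le_sqrt h2
      _ = Real.sqrt (x ⬝ᵥ A.mulVec x) * Real.sqrt a := Real.sqrt_mul (aux_q_nonneg A hA x) a

/-- The matrix whose columns are the vectors `v i`. -/
noncomputable def colMat {n : ℕ} (v : Fin n → Fin n → ℝ) : Matrix (Fin n) (Fin n) ℝ :=
  Matrix.of fun j i => v i j

lemma aux_colwise {n : ℕ} (v : Fin n → Fin n → ℝ) (B : Matrix (Fin n) (Fin n) ℝ)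
    (f : Fin n → ℝ) (h : ∀ i, B.mulVec (v i) = f i • v i) :
    B * colMat v = colMat v * Matrix.diagonal f := by
  ext j i
  rw [Matrix.mul_apply, Matrix.mul_diagonal]
  have := congrFun (h i) j
  simp only [Matrix.mulVec, dotProduct, Pi.smul_apply, smul_eq_mul] at this
  simp only [colMat, Matrix.of_apply]
  rw [this]
  ring

lemma aux_VAV {n : ℕ} (v : Fin n → Fin n → ℝ) (A : Matrix (Fin n) (Fin n) ℝ)
    (horth : ∀ i j, v i ⬝ᵥ A.mulVec (v j) = if i = j then 1 else 0) :
    (colMat v)ᵀ * A * colMat v = 1 := by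
  ext i j
  have := horth i j
  simp only [Matrix.mulVec, dotProduct] at this
  simp only [Matrix.mul_apply, Matrix.transpose_apply, colMat, Matrix.of_apply,
    Matrix.one_apply]
  rw [← this]
  simp only [Finset.sum_mul, Finset.mul_sum]
  rw [Finset.sum_comm]
  exact Finset.sum_congr rfl fun a _ => Finset.sum_congr rfl fun b _ => by ring

lemma aux_V_single {n : ℕ} (v : Fin n → Fin n → ℝ) (i : Fin n) :
    (colMat v).mulVec (Pi.single i 1) = v i := by
  ext j
  rw [Matrix.mulVec_single]
  simp [colMat]

/-- `PᵀAP` is positive definite. -/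
lemma aux_N_posdef {n nc : ℕ} (A : Matrix (Fin n) (Fin n) ℝ) (P : Matrix (Fin n) (Fin nc) ℝ)
    (hA : A.PosDef) (hP : P.rank = nc) : (Pᵀ * A * P).PosDef := by
  refine Matrix.PosDef.of_dotProduct_mulVec_pos ?_ ?_
  · have hT : Aᵀ = A := by simpa [Matrix.IsHermitian] using hA.1
    show (Pᵀ * A * P)ᴴ = _
    simp only [conjTranspose_eq_transpose_of_trivial, Matrix.transpose_mul,
      Matrix.transpose_transpose, hT]
    rw [Matrix.mul_assoc]
  · intro x hx
    have h1 : (P.mulVec x) ⬝ᵥ A.mulVec (P.mulVec x) = x ⬝ᵥ (Pᵀ * A * P).mulVec x :=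
      aux_dp_conj A P x x
    have h2 : 0 < (P.mulVec x) ⬝ᵥ A.mulVec (P.mulVec x) := by
      simpa using hA.dotProduct_mulVec_pos (aux_mulVec_inj P hP hx)
    rw [h1] at h2
    simpa using h2

/-- The action of the `A`-orthogonal projection onto `Range P` on the eigenvectors. -/
lemma aux_proj_eig {n nc : ℕ} (A : Matrix (Fin n) (Fin n) ℝ) (P : Matrix (Fin n) (Fin nc) ℝ)
    (hA : A.PosDef) (hP : P.rank = nc) (hnc : nc < n) (v : Fin n → Fin n → ℝ)
    (horth : ∀ i j, v i ⬝ᵥ A.mulVec (v j) = if i = j then 1 else 0)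
    (hspan : LinearMap.range P.mulVecLin =
      Submodule.span ℝ (Set.range fun i : Fin nc => v (Fin.castLE hnc.le i)))
    (i : Fin n) :
    (proj A P).mulVec (v i) = (if (i : ℕ) < nc then (1:ℝ) else 0) • v i := by
  have hN : IsUnit (Pᵀ * A * P).det :=
    (aux_N_posdef A P hA hP).isUnit.map (Matrix.detMonoidHom)
  by_cases hi : (i : ℕ) < nc
  · have hmem : v i ∈ LinearMap.range P.mulVecLin := by
      rw [hspan]
      apply Submodule.subset_span
      refine ⟨⟨(i : ℕ), hi⟩, ?_⟩
      show v (Fin.castLE hnc.le ⟨(i : ℕ), hi⟩) = v i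
      congr 1
    obtain ⟨c, hc⟩ := hmem
    rw [Matrix.mulVecLin_apply] at hc
    have hPP : proj A P * P = P := by
      unfold proj
      calc P * (Pᵀ * A * P)⁻¹ * Pᵀ * A * P
          = P * ((Pᵀ * A * P)⁻¹ * (Pᵀ * A * P)) := by simp only [Matrix.mul_assoc]
        _ = P := by rw [Matrix.nonsing_inv_mul _ hN, Matrix.mul_one]
    rw [← hc, Matrix.mulVec_mulVec, hPP, if_pos hi, one_smul]
  · have hz : Pᵀ.mulVec (A.mulVec (v i)) = 0 := by
      set z := A.mulVec (v i) with hz'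
      let f : (Fin n → ℝ) →ₗ[ℝ] ℝ :=
        { toFun := fun u => u ⬝ᵥ z
          map_add' := fun a b => add_dotProduct a b z
          map_smul' := fun c a => smul_dotProduct c a z }
      have hle : LinearMap.range P.mulVecLin ≤ LinearMap.ker f := by
        rw [hspan, Submodule.span_le]
        rintro _ ⟨k, rfl⟩
        have : v (Fin.castLE hnc.le k) ⬝ᵥ z = 0 := by
          rw [hz', horth]
          rw [if_neg]
          intro h
          apply hi
          rw [← h]
          exact k.isLt
        exact this
      ext j
      have hcol : P.mulVec (Pi.single j 1) ∈ LinearMap.range P.mulVecLin :=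
        ⟨Pi.single j 1, rfl⟩
      have : (P.mulVec (Pi.single j 1)) ⬝ᵥ z = 0 := hle hcol
      rw [Matrix.mulVec_single] at this
      simp only [Pi.zero_apply]
      rw [show Pᵀ.mulVec z j = (fun k => P k j) ⬝ᵥ z from rfl, ← this]
      apply Finset.sum_congr rfl
      intros; simp [Matrix.transpose_apply]
    unfold proj
    rw [if_neg hi, zero_smul]
    have : (P * (Pᵀ * A * P)⁻¹ * Pᵀ * A).mulVec (v i)
        = (P * (Pᵀ * A * P)⁻¹).mulVec (Pᵀ.mulVec (A.mulVec (v i))) := by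
      simp [Matrix.mulVec_mulVec, Matrix.mul_assoc]
    rw [this, hz, Matrix.mulVec_zero]

/-- The key algebraic identity `G G' = 1 - X`. -/
lemma aux_GG' {n ns : ℕ} (A : Matrix (Fin n) (Fin n) ℝ) (S : Matrix (Fin n) (Fin ns) ℝ)
    (Ms : Matrix (Fin ns) (Fin ns) ℝ)
    (hMs : IsUnit Ms.det) (hR : IsUnit (Ms + Msᵀ - Sᵀ * A * S).det) :
    (1 - S * Ms⁻¹ * Sᵀ * A) * (1 - S * (Msᵀ)⁻¹ * Sᵀ * A) = 1 - smoothX A S Ms := by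
  have hMsT : IsUnit Msᵀ.det := by rwa [Matrix.det_transpose]
  have hinv : (tMs Ms (Sᵀ * A * S))⁻¹
      = Ms⁻¹ * (Ms + Msᵀ - Sᵀ * A * S) * (Msᵀ)⁻¹ := by
    unfold tMs
    rw [Matrix.mul_inv_rev, Matrix.mul_inv_rev,
      Matrix.nonsing_inv_nonsing_inv _ hR]
    noncomm_ring
  have h1 : Ms⁻¹ * Ms = 1 := Matrix.nonsing_inv_mul _ hMs
  have h2 : Msᵀ * (Msᵀ)⁻¹ = 1 := Matrix.mul_nonsing_inv _ hMsT
  have mid : Ms⁻¹ * (Ms + Msᵀ - Sᵀ * A * S) * (Msᵀ)⁻¹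
      = (Msᵀ)⁻¹ + Ms⁻¹ - Ms⁻¹ * (Sᵀ * A * S) * (Msᵀ)⁻¹ := by
    calc Ms⁻¹ * (Ms + Msᵀ - Sᵀ * A * S) * (Msᵀ)⁻¹
        = (Ms⁻¹ * Ms) * (Msᵀ)⁻¹ + Ms⁻¹ * (Msᵀ * (Msᵀ)⁻¹)
          - Ms⁻¹ * (Sᵀ * A * S) * (Msᵀ)⁻¹ := by noncomm_ring
      _ = (Msᵀ)⁻¹ + Ms⁻¹ - Ms⁻¹ * (Sᵀ * A * S) * (Msᵀ)⁻¹ := by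
          rw [h1, h2, Matrix.one_mul, Matrix.mul_one]
  unfold smoothX
  rw [hinv, mid]
  simp only [Matrix.mul_add, Matrix.add_mul, Matrix.mul_sub, Matrix.sub_mul,
    Matrix.mul_one, Matrix.one_mul, Matrix.mul_assoc]
  abel

lemma aux_A_G' {n ns : ℕ} (A : Matrix (Fin n) (Fin n) ℝ) (S : Matrix (Fin n) (Fin ns) ℝ)
    (Ms : Matrix (Fin ns) (Fin ns) ℝ) (hT : Aᵀ = A) :
    A * (1 - S * (Msᵀ)⁻¹ * Sᵀ * A) = (1 - S * Ms⁻¹ * Sᵀ * A)ᵀ * A := by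
  have : (Ms⁻¹)ᵀ = (Msᵀ)⁻¹ := Matrix.transpose_nonsing_inv Ms
  simp only [Matrix.transpose_sub, Matrix.transpose_one, Matrix.transpose_mul,
    Matrix.transpose_transpose, this, hT]
  simp only [Matrix.mul_sub, Matrix.sub_mul, Matrix.mul_one, Matrix.one_mul,
    Matrix.mul_assoc]

lemma aux_proj_idem {n nc : ℕ} (A : Matrix (Fin n) (Fin n) ℝ) (P : Matrix (Fin n) (Fin nc) ℝ)
    (hN : IsUnit (Pᵀ * A * P).det) : proj A P * proj A P = proj A P := by
  unfold proj
  calc P * (Pᵀ * A * P)⁻¹ * Pᵀ * A * (P * (Pᵀ * A * P)⁻¹ * Pᵀ * A)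
      = P * ((Pᵀ * A * P)⁻¹ * ((Pᵀ * A * P) * ((Pᵀ * A * P)⁻¹ * (Pᵀ * A)))) := by
        simp only [Matrix.mul_assoc]
    _ = P * (Pᵀ * A * P)⁻¹ * Pᵀ * A := by
        rw [← Matrix.mul_assoc (Pᵀ * A * P), Matrix.mul_nonsing_inv _ hN, Matrix.one_mul]
        simp only [Matrix.mul_assoc]

lemma aux_A_proj {n nc : ℕ} (A : Matrix (Fin n) (Fin n) ℝ) (P : Matrix (Fin n) (Fin nc) ℝ)
    (hT : Aᵀ = A) (hNsymm : (Pᵀ * A * P)ᵀ = Pᵀ * A * P) :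
    A * (1 - proj A P) = (1 - proj A P)ᵀ * A := by
  have hinvT : ((Pᵀ * A * P)⁻¹)ᵀ = (Pᵀ * A * P)⁻¹ := by
    rw [Matrix.transpose_nonsing_inv, hNsymm]
  unfold proj
  simp only [Matrix.transpose_sub, Matrix.transpose_one, Matrix.transpose_mul,
    Matrix.transpose_transpose, hinvT, hT]
  simp only [Matrix.mul_sub, Matrix.sub_mul, Matrix.mul_one, Matrix.one_mul,
    Matrix.mul_assoc]

end AuxLemmas

/-- Optimal interpolation: if `Range(P) = span{v_1, …, v_{n_c}}`, where `(μ_i, v_i)` are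
`A`-orthonormal eigenpairs of `S M̃_s⁻¹ Sᵀ A` with `μ_1 ≤ ⋯ ≤ μ_n`, then
`‖E_TL‖_A = 1 - μ_{n_c+1}`. -/
theorem optimal_interpolation_equality {n ns nc : ℕ}
    (A : Matrix (Fin n) (Fin n) ℝ) (hA : A.PosDef)
    (S : Matrix (Fin n) (Fin ns) ℝ) (hS : S.rank = ns)
    (P : Matrix (Fin n) (Fin nc) ℝ) (hP : P.rank = nc)
    (hns : ns < n) (hnc : nc < n) (hsum : n ≤ ns + nc)
    (hSP : (fromCols S P).rank = n)
    (Ms : Matrix (Fin ns) (Fin ns) ℝ) (hMs : IsUnit Ms.det)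
    (hMsA : (Ms + Msᵀ - Sᵀ * A * S).PosDef)
    (μ : Fin n → ℝ) (v : Fin n → Fin n → ℝ)
    (hmono : Monotone μ)
    (heig : ∀ i, (smoothX A S Ms).mulVec (v i) = μ i • v i)
    (horth : ∀ i j, v i ⬝ᵥ A.mulVec (v j) = if i = j then 1 else 0)
    (hspan : LinearMap.range P.mulVecLin =
      Submodule.span ℝ (Set.range fun i : Fin nc => v (Fin.castLE hnc.le i))) :
    aNorm A (Etl A S P Ms) = 1 - μ ⟨nc, hnc⟩ := by
  classical
  -- notation
  set G : Matrix (Fin n) (Fin n) ℝ := 1 - S * Ms⁻¹ * Sᵀ * A with hG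
  set G' : Matrix (Fin n) (Fin n) ℝ := 1 - S * (Msᵀ)⁻¹ * Sᵀ * A with hG'
  set Pi' : Matrix (Fin n) (Fin n) ℝ := proj A P with hPi
  set F : Matrix (Fin n) (Fin n) ℝ := (1 - Pi') * G with hF
  set F' : Matrix (Fin n) (Fin n) ℝ := G' * (1 - Pi') with hF'
  set V : Matrix (Fin n) (Fin n) ℝ := colMat v with hV
  set X : Matrix (Fin n) (Fin n) ℝ := smoothX A S Ms with hX
  set j₀ : Fin n := ⟨nc, hnc⟩ with hj₀
  set t : ℝ := 1 - μ j₀ with htdef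
  have hT : Aᵀ = A := by simpa [Matrix.IsHermitian] using hA.1
  have hNpd : (Pᵀ * A * P).PosDef := aux_N_posdef A P hA hP
  have hN : IsUnit (Pᵀ * A * P).det := hNpd.isUnit.map Matrix.detMonoidHom
  have hNsymm : (Pᵀ * A * P)ᵀ = Pᵀ * A * P := by
    have := hNpd.1
    simpa [Matrix.IsHermitian] using this
  have hR : IsUnit (Ms + Msᵀ - Sᵀ * A * S).det := hMsA.isUnit.map Matrix.detMonoidHom
  -- key algebra
  have hGG' : G * G' = 1 - smoothX A S Ms := aux_GG' A S Ms hMs hR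
  have hVAV : Vᵀ * A * V = 1 := aux_VAV v A horth
  have hVinv : V * (Vᵀ * A) = 1 := mul_eq_one_comm.mp hVAV
  -- eigen action of projection and smoother
  have hXV : X * V = V * Matrix.diagonal μ := aux_colwise v X μ heig
  have hPiV : Pi' * V
      = V * Matrix.diagonal (fun i : Fin n => if (i : ℕ) < nc then (1:ℝ) else 0) := by
    exact aux_colwise v Pi' _ (aux_proj_eig A P hA hP hnc v horth hspan)
  -- (1 - Pi') * V and (1 - X) * V
  have h1PiV : (1 - Pi') * V
      = V * Matrix.diagonal (fun i : Fin n => if (i : ℕ) < nc then (0:ℝ) else 1) := by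
    have step : (1 - Pi') * V = V * (1 - Matrix.diagonal
        (fun i : Fin n => if (i : ℕ) < nc then (1:ℝ) else 0)) := by
      rw [Matrix.sub_mul, Matrix.one_mul, hPiV, Matrix.mul_sub, Matrix.mul_one]
    rw [step, ← Matrix.diagonal_one, Matrix.diagonal_sub]
    congr 1
    refine congrArg Matrix.diagonal ?_
    funext i
    by_cases h : (i : ℕ) < nc <;> simp [h]
  have h1XV : (1 - X) * V = V * Matrix.diagonal (fun i => 1 - μ i) := by
    have step : (1 - X) * V = V * (1 - Matrix.diagonal μ) := by
      rw [Matrix.sub_mul, Matrix.one_mul, hXV, Matrix.mul_sub, Matrix.mul_one]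
    rw [step, ← Matrix.diagonal_one, Matrix.diagonal_sub]
  -- the diagonal entries of F F'
  set δ : Fin n → ℝ := fun i => if (i : ℕ) < nc then 0 else 1 - μ i with hδ
  have hFF' : F * F' = (1 - Pi') * ((1 - X) * (1 - Pi')) := by
    rw [hF, hF', Matrix.mul_assoc, ← Matrix.mul_assoc G, hGG', ← hX]
  have hWV : (F * F') * V = V * Matrix.diagonal δ := by
    set Q1 : Matrix (Fin n) (Fin n) ℝ :=
      Matrix.diagonal (fun i : Fin n => if (i : ℕ) < nc then (0:ℝ) else 1) with hQ1
    set Dm : Matrix (Fin n) (Fin n) ℝ := Matrix.diagonal (fun i => 1 - μ i) with hDm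
    rw [hFF']
    calc (1 - Pi') * ((1 - X) * (1 - Pi')) * V
        = (1 - Pi') * ((1 - X) * ((1 - Pi') * V)) := by simp only [Matrix.mul_assoc]
      _ = (1 - Pi') * ((1 - X) * (V * Q1)) := by rw [h1PiV]
      _ = (1 - Pi') * (((1 - X) * V) * Q1) := by simp only [Matrix.mul_assoc]
      _ = (1 - Pi') * ((V * Dm) * Q1) := by rw [h1XV]
      _ = ((1 - Pi') * V) * (Dm * Q1) := by simp only [Matrix.mul_assoc]
      _ = (V * Q1) * (Dm * Q1) := by rw [h1PiV]
      _ = V * (Q1 * (Dm * Q1)) := by simp only [Matrix.mul_assoc]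
      _ = V * Matrix.diagonal δ := by
          rw [hQ1, hDm, Matrix.diagonal_mul_diagonal, Matrix.diagonal_mul_diagonal]
          congr 1
          refine congrArg Matrix.diagonal ?_
          funext i
          by_cases h : (i : ℕ) < nc <;> simp [hδ, h]
  have hW : F * F' = V * Matrix.diagonal δ * (Vᵀ * A) := by
    calc F * F' = (F * F') * (V * (Vᵀ * A)) := by rw [hVinv, Matrix.mul_one]
      _ = ((F * F') * V) * (Vᵀ * A) := by simp only [Matrix.mul_assoc]
      _ = V * Matrix.diagonal δ * (Vᵀ * A) := by rw [hWV]
  -- E = F' * F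
  have h1Pi2 : (1 - Pi') * (1 - Pi') = 1 - Pi' := by
    have hidem : Pi' * Pi' = Pi' := aux_proj_idem A P hN
    rw [Matrix.mul_sub, Matrix.mul_one, Matrix.sub_mul, Matrix.one_mul, hidem]
    abel
  have hE : Etl A S P Ms = F' * F := by
    have h1 : F' * F = G' * (((1 - Pi') * (1 - Pi')) * G) := by
      rw [hF', hF]; simp only [Matrix.mul_assoc]
    rw [h1, h1Pi2, ← Matrix.mul_assoc]
    rfl
  -- adjoint fact : A * F' = Fᵀ * A
  have hadj : A * F' = Fᵀ * A := by
    rw [hF', hF, Matrix.transpose_mul, ← Matrix.mul_assoc,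
      aux_A_G' A S Ms hT, Matrix.mul_assoc, aux_A_proj A P hT hNsymm,
      ← Matrix.mul_assoc]
  have hadjT : F'ᵀ * A = A * F := by
    have := congrArg Matrix.transpose hadj
    simp only [Matrix.transpose_mul, Matrix.transpose_transpose, hT] at this
    exact this
  -- L1 : ⟨F'y, F'y⟩_A = ⟨y, (F F') y⟩_A
  have hL1 : ∀ y : Fin n → ℝ,
      (F'.mulVec y) ⬝ᵥ A.mulVec (F'.mulVec y)
        = y ⬝ᵥ A.mulVec ((F * F').mulVec y) := by
    intro y
    rw [aux_dp_conj A F' y y]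
    have hmat : F'ᵀ * A * F' = A * (F * F') := by
      rw [hadjT, Matrix.mul_assoc]
    rw [hmat, ← Matrix.mulVec_mulVec]
  -- compute ⟨y, (F F') y⟩_A in coordinates
  have hcoord : ∀ y : Fin n → ℝ,
      y ⬝ᵥ A.mulVec ((F * F').mulVec y)
        = ∑ i, δ i * ((Vᵀ * A).mulVec y i * (Vᵀ * A).mulVec y i) := by
    intro y
    set c : Fin n → ℝ := (Vᵀ * A).mulVec y with hc
    have hy : y = V.mulVec c := by
      rw [hc, Matrix.mulVec_mulVec, hVinv, Matrix.one_mulVec]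
    have h1 : (F * F').mulVec y = V.mulVec ((Matrix.diagonal δ).mulVec c) := by
      rw [hW, ← Matrix.mulVec_mulVec, ← Matrix.mulVec_mulVec, ← hc]
    calc y ⬝ᵥ A.mulVec ((F * F').mulVec y)
        = (V.mulVec c) ⬝ᵥ A.mulVec (V.mulVec ((Matrix.diagonal δ).mulVec c)) := by
          rw [← h1, ← hy]
      _ = c ⬝ᵥ (Vᵀ * A * V).mulVec ((Matrix.diagonal δ).mulVec c) :=
          aux_dp_conj A V c _
      _ = c ⬝ᵥ (Matrix.diagonal δ).mulVec c := by rw [hVAV, Matrix.one_mulVec]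
      _ = ∑ i, δ i * (c i * c i) := by
          simp only [dotProduct, Matrix.mulVec_diagonal]
          exact Finset.sum_congr rfl fun i _ => by ring
  have hnormcoord : ∀ y : Fin n → ℝ,
      y ⬝ᵥ A.mulVec y = ∑ i, (Vᵀ * A).mulVec y i * (Vᵀ * A).mulVec y i := by
    intro y
    set c : Fin n → ℝ := (Vᵀ * A).mulVec y with hc
    have hy : y = V.mulVec c := by
      rw [hc, Matrix.mulVec_mulVec, hVinv, Matrix.one_mulVec]
    calc y ⬝ᵥ A.mulVec y = (V.mulVec c) ⬝ᵥ A.mulVec (V.mulVec c) := by rw [← hy]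
      _ = c ⬝ᵥ (Vᵀ * A * V).mulVec c := aux_dp_conj A V c c
      _ = c ⬝ᵥ c := by rw [hVAV, Matrix.one_mulVec]
      _ = ∑ i, c i * c i := by simp [dotProduct]
  -- action of F*F' on v j₀
  have hsingle : (F * F').mulVec (v j₀) = t • v j₀ := by
    have h1 : v j₀ = V.mulVec (Pi.single j₀ 1) := (aux_V_single v j₀).symm
    rw [h1, Matrix.mulVec_mulVec, hWV, ← Matrix.mulVec_mulVec,
      Matrix.diagonal_mulVec_single]
    have h2 : (Pi.single j₀ (δ j₀ * 1) : Fin n → ℝ)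
        = δ j₀ • (Pi.single j₀ (1:ℝ) : Fin n → ℝ) := by
      funext k
      by_cases hk : k = j₀ <;> simp [Pi.single_apply, hk]
    rw [h2, Matrix.mulVec_smul]
    have h3 : δ j₀ = t := by
      rw [hδ]
      simp only [hj₀]
      rw [if_neg (by simp)]
    rw [h3]
  -- value at j₀ : t = ‖F' v j₀‖²_A ≥ 0
  have hqj : (F'.mulVec (v j₀)) ⬝ᵥ A.mulVec (F'.mulVec (v j₀)) = t := by
    rw [hL1, hsingle, Matrix.mulVec_smul, dotProduct_smul, horth, if_pos rfl]
    simp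
  have ht0 : 0 ≤ t := by
    rw [← hqj]
    exact aux_q_nonneg A hA _
  -- bound : δ i ≤ t
  have hδt : ∀ i, δ i ≤ t := by
    intro i
    rw [hδ]
    by_cases h : (i : ℕ) < nc
    · simpa [h] using ht0
    · simp only [h, if_false, htdef]
      have : μ j₀ ≤ μ i := hmono (by
        rw [Fin.le_def]
        simpa [hj₀] using not_lt.mp h)
      linarith
  -- L2 : ⟨y, (F F') y⟩_A ≤ t ⟨y,y⟩_A
  have hL2 : ∀ y : Fin n → ℝ,
      y ⬝ᵥ A.mulVec ((F * F').mulVec y) ≤ t * (y ⬝ᵥ A.mulVec y) := by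
    intro y
    rw [hcoord y, hnormcoord y, Finset.mul_sum]
    apply Finset.sum_le_sum
    intro i _
    exact mul_le_mul_of_nonneg_right (hδt i) (mul_self_nonneg _)
  -- main inequality
  have hmain : ∀ w : Fin n → ℝ,
      eNorm A ((Etl A S P Ms).mulVec w) ≤ t * eNorm A w := by
    intro w
    set a : Fin n → ℝ := (Etl A S P Ms).mulVec w with haw
    have haF : a = F'.mulVec (F.mulVec w) := by
      rw [haw, hE, ← Matrix.mulVec_mulVec]
    have hq1 : a ⬝ᵥ A.mulVec a ≤ t * ((F.mulVec w) ⬝ᵥ A.mulVec (F.mulVec w)) := by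
      rw [haF, hL1]
      exact hL2 _
    have hq2 : (F.mulVec w) ⬝ᵥ A.mulVec (F.mulVec w) = w ⬝ᵥ A.mulVec a := by
      have hmat2 : Fᵀ * A * F = A * (F' * F) := by
        rw [← hadj, Matrix.mul_assoc]
      rw [aux_dp_conj A F w w, hmat2, ← Matrix.mulVec_mulVec, ← hE, ← haw]
    have hcs : w ⬝ᵥ A.mulVec a
        ≤ Real.sqrt (w ⬝ᵥ A.mulVec w) * Real.sqrt (a ⬝ᵥ A.mulVec a) :=
      aux_cs A hA w a
    set α : ℝ := Real.sqrt (a ⬝ᵥ A.mulVec a) with hα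
    set β : ℝ := Real.sqrt (w ⬝ᵥ A.mulVec w) with hβ
    have hα0 : 0 ≤ α := Real.sqrt_nonneg _
    have hβ0 : 0 ≤ β := Real.sqrt_nonneg _
    have hαsq : α * α = a ⬝ᵥ A.mulVec a := Real.mul_self_sqrt (aux_q_nonneg A hA a)
    show α ≤ t * β
    have hchain : α * α ≤ t * (β * α) := by
      rw [hαsq]
      calc a ⬝ᵥ A.mulVec a ≤ t * ((F.mulVec w) ⬝ᵥ A.mulVec (F.mulVec w)) := hq1
        _ = t * (w ⬝ᵥ A.mulVec a) := by rw [hq2]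
        _ ≤ t * (β * α) := mul_le_mul_of_nonneg_left hcs ht0
    by_cases hc : α = 0
    · rw [hc]
      exact mul_nonneg ht0 hβ0
    · have hαpos : 0 < α := lt_of_le_of_ne hα0 (Ne.symm hc)
      have : α * α ≤ (t * β) * α := by
        calc α * α ≤ t * (β * α) := hchain
          _ = (t * β) * α := by ring
      exact le_of_mul_le_mul_right this hαpos
  -- the set of ratios
  set RS : Set ℝ :=
    {r : ℝ | ∃ w : Fin n → ℝ, w ≠ 0 ∧ r = eNorm A ((Etl A S P Ms).mulVec w) / eNorm A w}
    with hRS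
  have hub : ∀ r ∈ RS, r ≤ t := by
    rintro r ⟨w, hw, rfl⟩
    have hewpos : 0 < eNorm A w := Real.sqrt_pos.mpr (aux_q_pos A hA hw)
    rw [div_le_iff₀ hewpos]
    exact hmain w
  have hvj0 : v j₀ ≠ 0 := by
    intro h0
    have := horth j₀ j₀
    rw [h0] at this
    simp at this
  -- t is attained
  have hmem : t ∈ RS := by
    by_cases htpos : 0 < t
    · -- use w₀ = F' (v j₀)
      set w₀ : Fin n → ℝ := F'.mulVec (v j₀) with hw₀
      have hqw₀ : w₀ ⬝ᵥ A.mulVec w₀ = t := hqj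
      have hw₀ne : w₀ ≠ 0 := by
        intro h0
        rw [h0] at hqw₀
        simp only [Matrix.mulVec_zero, zero_dotProduct] at hqw₀
        linarith
      have hEw₀ : (Etl A S P Ms).mulVec w₀ = t • w₀ := by
        rw [hw₀, hE]
        calc (F' * F).mulVec (F'.mulVec (v j₀))
            = F'.mulVec ((F * F').mulVec (v j₀)) := by
              rw [Matrix.mulVec_mulVec, Matrix.mulVec_mulVec, Matrix.mul_assoc]
          _ = F'.mulVec (t • v j₀) := by rw [hsingle]
          _ = t • w₀ := by rw [Matrix.mulVec_smul, hw₀]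
      refine ⟨w₀, hw₀ne, ?_⟩
      rw [hEw₀]
      have h1 : eNorm A (t • w₀) = t * eNorm A w₀ := by
        unfold eNorm
        rw [Matrix.mulVec_smul, dotProduct_smul, smul_dotProduct]
        rw [show (t • (t • (w₀ ⬝ᵥ A.mulVec w₀))) = t^2 * (w₀ ⬝ᵥ A.mulVec w₀) by
          simp [smul_eq_mul]; ring]
        rw [Real.sqrt_mul (sq_nonneg t), Real.sqrt_sq ht0]
      rw [h1]
      have hepos : 0 < eNorm A w₀ := Real.sqrt_pos.mpr (aux_q_pos A hA hw₀ne)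
      field_simp
    · -- t = 0 and the ratio 0 is attained at v j₀
      have ht : t = 0 := le_antisymm (not_lt.mp htpos) ht0
      refine ⟨v j₀, hvj0, ?_⟩
      have h1 : eNorm A ((Etl A S P Ms).mulVec (v j₀)) = 0 := by
        have h2 := hmain (v j₀)
        rw [ht, zero_mul] at h2
        exact le_antisymm h2 (Real.sqrt_nonneg _)
      rw [h1, ht, zero_div]
  -- conclude
  show sSup RS = t
  exact le_antisymm (csSup_le ⟨t, hmem⟩ hub) (le_csSup ⟨t, hub⟩ hmem)
end
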